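/- arXiv:2604.23201 — 10 statements merged into one kernel-verified Lean document; each statement's English description precedes it below -/
import Mathlib

section
/- Let X be a Hausdorff topological space and G a subgroup of the group of homeomorphisms of X. Let τ_p be the topology on G generated by the subbasic sets [x, O] = {g ∈ G : g(x) ∈ O} for x ∈ X and O ⊆ X open (the topology of pointwise convergence), and let τ_g be the topology on G generated by the subbasic sets [K, O] = {g ∈ G : g(K) ⊆ O} where K ⊆ X is closed, O ⊆ X is open, and either K is compact or X ∖ O is compact (the g-topology). If (G, τ_p) is a topological group and the evaluation action (G, τ_p) × X → X, (g, x) ↦ g(x), is continuous, then τ_p = τ_g. -/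
/-- Let `X` be Hausdorff and `G` a subgroup of the group of homeomorphisms of `X`
(modelled as a subgroup of the permutation group all of whose elements are continuous,
hence homeomorphisms since `G` is closed under inverses).
If the topology of pointwise convergence `τp` on `G` makes `G` a topological group and the
evaluation action continuous, then `τp` coincides with the `g`-topology `τg`. -/
theorem stmt_0 {X : Type*} [TopologicalSpace X] [T2Space X]
    (G : Subgroup (Equiv.Perm X))
    (hhomeo : ∀ g : G, Continuous ⇑(g : Equiv.Perm X))
    (τp τg : TopologicalSpace G)
    (hτp : τp = TopologicalSpace.generateFrom
      {s : Set G | ∃ (x : X) (O : Set X), IsOpen O ∧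
        s = {g : G | (g : Equiv.Perm X) x ∈ O}})
    (hτg : τg = TopologicalSpace.generateFrom
      {s : Set G | ∃ (K O : Set X), IsClosed K ∧ IsOpen O ∧ (IsCompact K ∨ IsCompact Oᶜ) ∧
        s = {g : G | ∀ x ∈ K, (g : Equiv.Perm X) x ∈ O}})
    (hgroup : @IsTopologicalGroup G τp inferInstance)
    (hact : @Continuous (G × X) X (@instTopologicalSpaceProd G X τp inferInstance)
      inferInstance (fun p => (p.1 : Equiv.Perm X) p.2)) :
    τp = τg := by
  letI := τp
  haveI := hgroup
  -- key: for K compact and O open, [K, O] is τp-open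
  have key : ∀ (K O : Set X), IsCompact K → IsOpen O →
      IsOpen {g : G | ∀ x ∈ K, (g : Equiv.Perm X) x ∈ O} := by
    intro K O hK hO
    rw [isOpen_iff_mem_nhds]
    intro g hg
    refine hK.eventually_forall_of_forall_eventually
      (P := fun (h : G) (x : X) => (h : Equiv.Perm X) x ∈ O) ?_
    intro x hx
    have hc : ContinuousAt (fun p : G × X => (p.1 : Equiv.Perm X) p.2) (g, x) :=
      hact.continuousAt
    exact hc (hO.mem_nhds (hg x hx))
  apply le_antisymm
  · -- τp ≤ τg : every τg-generator is τp-open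
    rw [hτg]
    apply le_generateFrom
    rintro s ⟨K, O, hKc, hO, hcomp, rfl⟩
    rcases hcomp with hK | hOc
    · exact key K O hK hO
    · have h1 : IsOpen {g : G | ∀ y ∈ Oᶜ, (g : Equiv.Perm X) y ∈ Kᶜ} :=
        key Oᶜ Kᶜ hOc hKc.isOpen_compl
      have h2 : {g : G | ∀ x ∈ K, (g : Equiv.Perm X) x ∈ O}
          = (fun g : G => g⁻¹) ⁻¹' {g : G | ∀ y ∈ Oᶜ, (g : Equiv.Perm X) y ∈ Kᶜ} := by
        ext g
        simp only [Set.mem_setOf_eq, Set.mem_preimage, Set.mem_compl_iff]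
        constructor
        · intro h y hy hyK
          exact hy (by simpa using h _ hyK)
        · intro h x hx
          by_contra hxO
          exact h _ hxO (by simpa using hx)
      rw [h2]
      exact h1.preimage continuous_inv
  · -- τg ≤ τp : every τp-generator is a τg-generator
    rw [hτp, hτg]
    apply le_generateFrom
    rintro s ⟨x, O, hO, rfl⟩
    refine TopologicalSpace.isOpen_generateFrom_of_mem ?_
    refine ⟨{x}, O, isClosed_singleton, hO, Or.inl isCompact_singleton, ?_⟩
    ext g
    simp
end

section
/- Let Y and X be locally compact Hausdorff spaces and f : Y → X a perfect continuous surjection. Then the induced map F : 2^Y → 2^X, F(A) = f(A) (the image of A under f), between the hyperspaces of closed subsets equipped with the Fell topologies, is a perfect continuous surjection. -/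
open Set TopologicalSpace Filter Topology

/-- The hyperspace of closed subsets of a topological space (including `∅`). -/
abbrev HClosed (Z : Type*) [TopologicalSpace Z] := {A : Set Z // IsClosed A}

/-- The Fell topology on the hyperspace of closed subsets: generated by the sets
`{A | A ∩ W ≠ ∅}` for `W` open and `{A | A ∩ K = ∅}` for `K` compact. -/
def fellTop (Z : Type*) [TopologicalSpace Z] : TopologicalSpace (HClosed Z) :=
  TopologicalSpace.generateFrom
    ({s | ∃ W : Set Z, IsOpen W ∧ s = {A : HClosed Z | ((A : Set Z) ∩ W).Nonempty}} ∪
     {s | ∃ K : Set Z, IsCompact K ∧ s = {A : HClosed Z | (A : Set Z) ∩ K = ∅}})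

/-- The generating family for the Fell topology. -/
def fellGen (Z : Type*) [TopologicalSpace Z] : Set (Set (HClosed Z)) :=
  ({s | ∃ W : Set Z, IsOpen W ∧ s = {A : HClosed Z | ((A : Set Z) ∩ W).Nonempty}} ∪
   {s | ∃ K : Set Z, IsCompact K ∧ s = {A : HClosed Z | (A : Set Z) ∩ K = ∅}})

lemma fellTop_eq (Z : Type*) [TopologicalSpace Z] :
    fellTop Z = TopologicalSpace.generateFrom (fellGen Z) := rfl

lemma le_nhds_fell {Z : Type*} [TopologicalSpace Z] {U : Filter (HClosed Z)} {A : HClosed Z}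
    (h : ∀ s ∈ fellGen Z, A ∈ s → s ∈ U) : U ≤ @nhds _ (fellTop Z) A := by
  rw [fellTop_eq, nhds_generateFrom]
  exact le_iInf₂ fun s hs => Filter.le_principal_iff.2 (h s hs.2 hs.1)

/-- The Fell hyperspace is always compact. -/
lemma fell_compactSpace (Z : Type*) [TopologicalSpace Z] :
    @CompactSpace (HClosed Z) (fellTop Z) := by
  letI := fellTop Z
  rw [← isCompact_univ_iff, isCompact_iff_ultrafilter_le_nhds]
  intro U _
  set A0 : Set Z := {y | ∀ W : Set Z, IsOpen W → y ∈ W →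
      {C : HClosed Z | ((C : Set Z) ∩ W).Nonempty} ∈ U} with hA0
  have hA0c : IsClosed A0 := by
    rw [← isOpen_compl_iff, isOpen_iff_forall_mem_open]
    intro y hy
    simp only [mem_compl_iff, hA0, mem_setOf_eq, not_forall] at hy
    obtain ⟨W, hWo, hyW, hWU⟩ := hy
    exact ⟨W, fun z hz hzA => hWU (hzA W hWo hz), hWo, hyW⟩
  refine ⟨⟨A0, hA0c⟩, mem_univ _, le_nhds_fell ?_⟩
  rintro s (⟨W, hWo, rfl⟩ | ⟨K, hKc, rfl⟩) hAs
  · obtain ⟨y, hyA, hyW⟩ := hAs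
    exact hyA W hWo hyW
  · -- `hAs : A0 ∩ K = ∅`; show `{C | C ∩ K = ∅} ∈ U`
    by_contra hnot
    have hcompl : {C : HClosed Z | ((C : Set Z) ∩ K).Nonempty} ∈ U := by
      have h1 := (Ultrafilter.compl_mem_iff_notMem).2 hnot
      have h2 : {C : HClosed Z | (C : Set Z) ∩ K = ∅}ᶜ
          = {C : HClosed Z | ((C : Set Z) ∩ K).Nonempty} := by
        ext C; simp [Set.nonempty_iff_ne_empty]
      rwa [h2] at h1
    have hWex : ∀ y : K, ∃ W : Set Z, IsOpen W ∧ (y : Z) ∈ W ∧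
        {C : HClosed Z | (C : Set Z) ∩ W = ∅} ∈ U := by
      rintro ⟨y, hyK⟩
      have hyA : y ∉ A0 := fun hyA => by
        have : y ∈ A0 ∩ K := ⟨hyA, hyK⟩
        rw [hAs] at this; exact this
      simp only [hA0, mem_setOf_eq, not_forall] at hyA
      obtain ⟨W, hWo, hyW, hWU⟩ := hyA
      refine ⟨W, hWo, hyW, ?_⟩
      have h2 : {C : HClosed Z | ((C : Set Z) ∩ W).Nonempty}ᶜ
          = {C : HClosed Z | (C : Set Z) ∩ W = ∅} := by
        ext C; simp [Set.nonempty_iff_ne_empty]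
      rw [← h2]
      exact (Ultrafilter.compl_mem_iff_notMem).2 hWU
    choose W hWo hyW hWU using hWex
    obtain ⟨t, ht⟩ := hKc.elim_finite_subcover W hWo
      (fun z hz => Set.mem_iUnion.2 ⟨⟨z, hz⟩, hyW ⟨z, hz⟩⟩)
    have hT : ({C : HClosed Z | ((C : Set Z) ∩ K).Nonempty} ∩
        ⋂ i ∈ t, {C : HClosed Z | (C : Set Z) ∩ W i = ∅}) ∈ U :=
      Filter.inter_mem hcompl ((Filter.biInter_mem t.finite_toSet).2 fun i _ => hWU i)
    obtain ⟨C, hC1, hC2⟩ := Ultrafilter.nonempty_of_mem hT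
    obtain ⟨z, hzC, hzK⟩ := hC1
    obtain ⟨_, ⟨i, rfl⟩, _, ⟨hit, rfl⟩, hzW⟩ := ht hzK
    have : z ∈ (C : Set Z) ∩ W i := ⟨hzC, hzW⟩
    rw [Set.mem_iInter₂.1 hC2 i hit] at this
    exact this

/-- The Fell hyperspace of a locally compact Hausdorff space is Hausdorff. -/
lemma fell_t2 (Z : Type*) [TopologicalSpace Z] [T2Space Z] [LocallyCompactSpace Z] :
    @T2Space (HClosed Z) (fellTop Z) := by
  letI := fellTop Z
  have key : ∀ A B : HClosed Z, ∀ y : Z, y ∈ (A : Set Z) → y ∉ (B : Set Z) →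
      ∃ u v : Set (HClosed Z), IsOpen u ∧ IsOpen v ∧ A ∈ u ∧ B ∈ v ∧ Disjoint u v := by
    intro A B y hyA hyB
    obtain ⟨K, hKn, hKB, hKc⟩ := local_compact_nhds
      (show (B : Set Z)ᶜ ∈ 𝓝 y from B.2.isOpen_compl.mem_nhds hyB)
    refine ⟨{C : HClosed Z | ((C : Set Z) ∩ interior K).Nonempty},
        {C : HClosed Z | (C : Set Z) ∩ K = ∅},
        isOpen_generateFrom_of_mem (Or.inl ⟨_, isOpen_interior, rfl⟩),
        isOpen_generateFrom_of_mem (Or.inr ⟨K, hKc, rfl⟩),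
        ⟨y, hyA, mem_interior_iff_mem_nhds.2 hKn⟩, ?_, ?_⟩
    · simp only [mem_setOf_eq]
      rw [Set.eq_empty_iff_forall_notMem]
      rintro z ⟨hzB, hzK⟩
      exact hKB hzK hzB
    · rw [Set.disjoint_left]
      rintro C ⟨z, hzC, hzint⟩ hC2
      have : z ∈ (C : Set Z) ∩ K := ⟨hzC, interior_subset hzint⟩
      rw [hC2] at this; exact this
  constructor
  intro A B hAB
  have hne : (A : Set Z) ≠ (B : Set Z) := fun h => hAB (Subtype.ext h)
  by_cases h : ∃ y, y ∈ (A : Set Z) ∧ y ∉ (B : Set Z)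
  · obtain ⟨y, hyA, hyB⟩ := h
    exact key A B y hyA hyB
  · push_neg at h
    have hsub : (A : Set Z) ⊆ (B : Set Z) := fun y hy => h y hy
    have hns : ¬ ((B : Set Z) ⊆ (A : Set Z)) := fun hBA =>
      hne (Set.Subset.antisymm hsub hBA)
    obtain ⟨y, hyB, hyA⟩ := Set.not_subset.1 hns
    obtain ⟨u, v, hu, hv, hBu, hAv, huv⟩ := key B A y hyB hyA
    exact ⟨v, u, hv, hu, hAv, hBu, huv.symm⟩

/-- A perfect continuous surjection `f : Y → X` of locally compact Hausdorff spaces induces a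
perfect continuous surjection `F : 2^Y → 2^X`, `F(A) = f(A)`, of the Fell hyperspaces. -/
theorem stmt_5 {Y X : Type*} [TopologicalSpace Y] [T2Space Y] [LocallyCompactSpace Y]
    [TopologicalSpace X] [T2Space X] [LocallyCompactSpace X]
    (f : Y → X) (hfc : Continuous f) (hfcl : IsClosedMap f)
    (hfib : ∀ x : X, IsCompact (f ⁻¹' {x})) (hfs : Function.Surjective f)
    (F : HClosed Y → HClosed X)
    (hF : ∀ A : HClosed Y, (F A : Set X) = f '' (A : Set Y)) :
    @Continuous _ _ (fellTop Y) (fellTop X) F ∧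
    @IsClosedMap _ _ (fellTop Y) (fellTop X) F ∧
    (∀ B : HClosed X, @IsCompact _ (fellTop Y) (F ⁻¹' {B})) ∧
    Function.Surjective F := by
  letI tY := fellTop Y
  letI tX := fellTop X
  haveI : CompactSpace (HClosed Y) := fell_compactSpace Y
  haveI : T2Space (HClosed X) := fell_t2 X
  have hproper : IsProperMap f :=
    isProperMap_iff_isClosedMap_and_compact_fibers.2 ⟨hfc, hfcl, hfib⟩
  have hcont : Continuous F := by
    rw [show tX = TopologicalSpace.generateFrom (fellGen X) from rfl,
      continuous_generateFrom_iff]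
    rintro s (⟨W, hWo, rfl⟩ | ⟨K, hKc, rfl⟩)
    · have heq : F ⁻¹' {B : HClosed X | ((B : Set X) ∩ W).Nonempty}
          = {A : HClosed Y | ((A : Set Y) ∩ f ⁻¹' W).Nonempty} := by
        ext A
        simp only [Set.mem_preimage, Set.mem_setOf_eq, hF]
        constructor
        · rintro ⟨x, ⟨y, hyA, rfl⟩, hxW⟩; exact ⟨y, hyA, hxW⟩
        · rintro ⟨y, hyA, hyW⟩; exact ⟨f y, ⟨y, hyA, rfl⟩, hyW⟩
      rw [heq]
      exact isOpen_generateFrom_of_mem (Or.inl ⟨_, hWo.preimage hfc, rfl⟩)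
    · have heq : F ⁻¹' {B : HClosed X | (B : Set X) ∩ K = ∅}
          = {A : HClosed Y | (A : Set Y) ∩ f ⁻¹' K = ∅} := by
        ext A
        simp only [Set.mem_preimage, Set.mem_setOf_eq, hF,
          ← Set.not_nonempty_iff_eq_empty]
        constructor
        · rintro hn ⟨y, hyA, hyK⟩; exact hn ⟨f y, ⟨y, hyA, rfl⟩, hyK⟩
        · rintro hn ⟨x, ⟨y, hyA, rfl⟩, hxK⟩; exact hn ⟨y, hyA, hxK⟩
      rw [heq]
      exact isOpen_generateFrom_of_mem (Or.inr ⟨_, hproper.isCompact_preimage hKc, rfl⟩)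
  refine ⟨hcont, hcont.isClosedMap, fun B => ?_, fun B => ?_⟩
  · exact (isClosed_singleton.preimage hcont).isCompact
  · refine ⟨⟨f ⁻¹' (B : Set X), B.2.preimage hfc⟩, Subtype.ext ?_⟩
    rw [hF]
    exact Set.image_preimage_eq (B : Set X) hfs
end

section
/- Let X be a compact Hausdorff space and G a subgroup of the homeomorphism group of X, equipped with the compact-open topology. Then the graph map ι : G → 2^{X×X}, ι(g) = Γ(g) = {(x, g(x)) : x ∈ X}, is a topological embedding of G into the hyperspace of closed subsets of X × X with the Vietoris topology. -/
open Topology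

/-- The Vietoris topology on the hyperspace of closed subsets: generated by the sets
`{A | A ∩ W ≠ ∅}` and `{A | A ⊆ W}` for `W` open. -/
def vietorisTop (Z : Type*) [TopologicalSpace Z] : TopologicalSpace (HClosed Z) :=
  TopologicalSpace.generateFrom
    ({s | ∃ W : Set Z, IsOpen W ∧ s = {A : HClosed Z | ((A : Set Z) ∩ W).Nonempty}} ∪
     {s | ∃ W : Set Z, IsOpen W ∧ s = {A : HClosed Z | (A : Set Z) ⊆ W}})

/-- The compact-open topology on a subgroup of the homeomorphism group of `X`, generated by
the sets `[K, O] = {g | g(K) ⊆ O}` for `K` compact and `O` open. -/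
def compactOpenTop {X : Type*} [TopologicalSpace X] (G : Subgroup (Equiv.Perm X)) :
    TopologicalSpace G :=
  TopologicalSpace.generateFrom
    {s : Set G | ∃ (K O : Set X), IsCompact K ∧ IsOpen O ∧
      s = {g : G | ∀ x ∈ K, (g : Equiv.Perm X) x ∈ O}}

/-- For a compact Hausdorff space `X` and a subgroup `G` of its homeomorphism group with the
compact-open topology, the graph map `g ↦ Γ(g)` is a topological embedding of `G` into the
hyperspace of closed subsets of `X × X` with the Vietoris topology. -/
theorem stmt_7 {X : Type*} [TopologicalSpace X] [CompactSpace X] [T2Space X]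
    (G : Subgroup (Equiv.Perm X))
    (hhomeo : ∀ g : G, Continuous ⇑(g : Equiv.Perm X))
    (ι : G → HClosed (X × X))
    (hι : ∀ g : G, (ι g : Set (X × X)) = {p : X × X | p.2 = (g : Equiv.Perm X) p.1}) :
    @IsEmbedding _ _ (compactOpenTop G) (vietorisTop (X × X)) ι := by
  classical
  letI tG : TopologicalSpace G := compactOpenTop G
  letI tV : TopologicalSpace (HClosed (X × X)) := vietorisTop (X × X)
  -- injectivity
  have hinj : Function.Injective ι := by
    intro g h hgh
    have hset : {p : X × X | p.2 = (g : Equiv.Perm X) p.1}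
        = {p : X × X | p.2 = (h : Equiv.Perm X) p.1} := by
      rw [← hι g, ← hι h, hgh]
    have hx : ∀ x : X, (g : Equiv.Perm X) x = (h : Equiv.Perm X) x := by
      intro x
      have : ((x, (g : Equiv.Perm X) x) : X × X)
          ∈ {p : X × X | p.2 = (h : Equiv.Perm X) p.1} := by
        rw [← hset]; exact rfl
      exact this
    exact Subtype.ext (Equiv.ext hx)
  -- direction A : tG ≤ induced ι tV
  have dirA : tG ≤ TopologicalSpace.induced ι tV := by
    have : tV = TopologicalSpace.generateFrom
        ({s | ∃ W : Set (X × X), IsOpen W ∧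
            s = {A : HClosed (X × X) | ((A : Set (X × X)) ∩ W).Nonempty}} ∪
         {s | ∃ W : Set (X × X), IsOpen W ∧
            s = {A : HClosed (X × X) | (A : Set (X × X)) ⊆ W}}) := rfl
    rw [this, induced_generateFrom_eq]
    apply le_generateFrom
    rintro s ⟨t, ht, rfl⟩
    rcases ht with ⟨W, hW, rfl⟩ | ⟨W, hW, rfl⟩
    · -- hit sets
      have heq : ι ⁻¹' {A : HClosed (X × X) | ((A : Set (X × X)) ∩ W).Nonempty}
          = ⋃ x : X, {h : G | ∀ z ∈ ({x} : Set X),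
              (h : Equiv.Perm X) z ∈ {y : X | (x, y) ∈ W}} := by
        ext h
        simp only [Set.mem_preimage, Set.mem_setOf_eq, Set.mem_iUnion, hι h]
        constructor
        · rintro ⟨⟨a, b⟩, ⟨h1, h2⟩⟩
          refine ⟨a, fun z hz => ?_⟩
          have hz' : z = a := hz
          subst hz'
          show ((z, (h : Equiv.Perm X) z) : X × X) ∈ W
          have h1' : b = (h : Equiv.Perm X) z := h1
          rwa [h1'] at h2
        · rintro ⟨x, hx⟩
          exact ⟨(x, (h : Equiv.Perm X) x), rfl, hx x rfl⟩
      rw [heq]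
      refine isOpen_iUnion fun x => ?_
      exact TopologicalSpace.GenerateOpen.basic _
        ⟨{x}, {y : X | (x, y) ∈ W}, isCompact_singleton,
          hW.preimage (Continuous.prodMk_right x), rfl⟩
    · -- containment sets
      rw [isOpen_iff_forall_mem_open]
      intro g hg
      have hg' : ∀ x : X, ((x, (g : Equiv.Perm X) x) : X × X) ∈ W := by
        intro x
        have hsub : (ι g : Set (X × X)) ⊆ W := hg
        rw [hι g] at hsub
        exact hsub rfl
      have key : ∀ x : X, ∃ V O : Set X, IsOpen V ∧ IsOpen O ∧ x ∈ V ∧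
          (∀ z ∈ closure V, (g : Equiv.Perm X) z ∈ O) ∧ closure V ×ˢ O ⊆ W := by
        intro x
        obtain ⟨U, O, hU, hO, hxU, hgxO, hUO⟩ :=
          isOpen_prod_iff.1 hW x ((g : Equiv.Perm X) x) (hg' x)
        have hV0open : IsOpen (U ∩ (g : Equiv.Perm X) ⁻¹' O) :=
          hU.inter (hO.preimage (hhomeo g))
        have hxV0 : x ∈ U ∩ (g : Equiv.Perm X) ⁻¹' O := ⟨hxU, hgxO⟩
        obtain ⟨t, htx, htc, hts⟩ :=
          exists_mem_nhds_isClosed_subset (hV0open.mem_nhds hxV0)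
        have hclos : closure (interior t) ⊆ U ∩ (g : Equiv.Perm X) ⁻¹' O :=
          (htc.closure_subset_iff.2 interior_subset).trans hts
        refine ⟨interior t, O, isOpen_interior, hO,
          mem_interior_iff_mem_nhds.2 htx, fun z hz => (hclos hz).2, ?_⟩
        rintro ⟨a, b⟩ ⟨ha, hb⟩
        exact hUO ⟨(hclos ha).1, hb⟩
      choose V O hVo hOo hxV hgVO hVOW using key
      obtain ⟨I, hI⟩ := isCompact_univ.elim_finite_subcover V hVo
        (fun x _ => Set.mem_iUnion.2 ⟨x, hxV x⟩)
      refine ⟨⋂ i ∈ I, {h : G | ∀ z ∈ closure (V i), (h : Equiv.Perm X) z ∈ O i},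
        ?_, ?_, ?_⟩
      · intro h hh
        have hh' : ∀ i ∈ I, ∀ z ∈ closure (V i), (h : Equiv.Perm X) z ∈ O i :=
          Set.mem_iInter₂.1 hh
        show (ι h : Set (X × X)) ⊆ W
        rw [hι h]
        rintro ⟨a, b⟩ hb
        have hb' : b = (h : Equiv.Perm X) a := hb
        obtain ⟨i, hiI, hai⟩ : ∃ i ∈ I, a ∈ V i := by
          have := hI (Set.mem_univ a)
          simpa using this
        have hhO : (h : Equiv.Perm X) a ∈ O i := hh' i hiI a (subset_closure hai)
        exact hVOW i ⟨subset_closure hai, by rw [hb']; exact hhO⟩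
      · exact isOpen_biInter_finset fun i _ =>
          TopologicalSpace.GenerateOpen.basic _
            ⟨closure (V i), O i, isClosed_closure.isCompact, hOo i, rfl⟩
      · exact Set.mem_iInter₂.2 fun i _ => fun z hz => hgVO i z hz
  -- direction B : induced ι tV ≤ tG
  have dirB : TopologicalSpace.induced ι tV ≤ tG := by
    apply le_generateFrom
    rintro s ⟨K, O, hK, hO, rfl⟩
    rw [isOpen_induced_iff]
    refine ⟨{A : HClosed (X × X) |
        (A : Set (X × X)) ⊆ (Kᶜ ×ˢ Set.univ ∪ Set.univ ×ˢ O)}, ?_, ?_⟩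
    · exact TopologicalSpace.GenerateOpen.basic _
        (Or.inr ⟨_, ((hK.isClosed.isOpen_compl).prod isOpen_univ).union
          (isOpen_univ.prod hO), rfl⟩)
    · ext g
      simp only [Set.mem_preimage, Set.mem_setOf_eq, hι g]
      constructor
      · intro hsub x hx
        have hmem := hsub (show ((x, (g : Equiv.Perm X) x) : X × X)
            ∈ {p : X × X | p.2 = (g : Equiv.Perm X) p.1} from rfl)
        rcases hmem with h1 | h2
        · exact absurd hx h1.1
        · exact h2.2
      · rintro hall ⟨a, b⟩ hb
        have hb' : b = (g : Equiv.Perm X) a := hb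
        by_cases ha : a ∈ K
        · right; exact ⟨trivial, by rw [hb']; exact hall a ha⟩
        · left; exact ⟨ha, trivial⟩
  exact ⟨⟨le_antisymm dirA dirB⟩, hinj⟩
end

section
/- Let Y be a locally compact Hausdorff space, X ⊆ Y an open subset, and G a group acting on Y by homeomorphisms such that g(X) = X for all g ∈ G and the induced action on X is faithful. Assume G carries a topology for which the graph map ι_Y : g ↦ Γ_Y(g) into (2^{Y×Y}, τ_F) is a topological embedding. Then the graph map ι_X : g ↦ Γ_X(g) = Γ_Y(g) ∩ (X × X) into (2^{X×X}, τ_F) is a topological embedding if and only if the following condition (R) holds: for every g ∈ G and every R in the closure of ι_Y(G) in (2^{Y×Y}, τ_F), R ∩ (X × X) = Γ_Y(g) ∩ (X × X) implies R = Γ_Y(g). -/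
open Topology

open Set Filter TopologicalSpace

namespace FellAux

variable {Z : Type*} [TopologicalSpace Z]

/-- Subbasic convergence criterion for the Fell topology. -/
lemma le_nhds_iff {U : Filter (HClosed Z)} {A : HClosed Z} :
    U ≤ @nhds _ (fellTop Z) A ↔
      (∀ W : Set Z, IsOpen W → ((A : Set Z) ∩ W).Nonempty →
        {F : HClosed Z | ((F : Set Z) ∩ W).Nonempty} ∈ U) ∧
      (∀ K : Set Z, IsCompact K → (A : Set Z) ∩ K = ∅ →
        {F : HClosed Z | (F : Set Z) ∩ K = ∅} ∈ U) := by
  have h := @tendsto_nhds_generateFrom_iff (HClosed Z) (HClosed Z) id U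
    (({s | ∃ W : Set Z, IsOpen W ∧ s = {A : HClosed Z | ((A : Set Z) ∩ W).Nonempty}} ∪
     {s | ∃ K : Set Z, IsCompact K ∧ s = {A : HClosed Z | (A : Set Z) ∩ K = ∅}})) A
  change (U ≤ @nhds _ (fellTop Z) A) ↔ _ at h
  rw [h]
  constructor
  · intro H
    refine ⟨fun W hW hAW => ?_, fun K hK hAK => ?_⟩
    · exact H _ (Or.inl ⟨W, hW, rfl⟩) hAW
    · exact H _ (Or.inr ⟨K, hK, rfl⟩) hAK
  · rintro ⟨H1, H2⟩ s (⟨W, hW, rfl⟩ | ⟨K, hK, rfl⟩) hA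
    · exact H1 W hW hA
    · exact H2 K hK hA

/-- Every ultrafilter converges in the Fell topology (compactness). -/
lemma exists_ultrafilter_le_nhds (U : Ultrafilter (HClosed Z)) :
    ∃ A : HClosed Z, ↑U ≤ @nhds _ (fellTop Z) A := by
  set A : Set Z := {z | ∀ W : Set Z, IsOpen W → z ∈ W →
    {F : HClosed Z | ((F : Set Z) ∩ W).Nonempty} ∈ U} with hA
  have hAc : IsClosed A := by
    rw [← isOpen_compl_iff, isOpen_iff_forall_mem_open]
    intro z hz
    simp only [mem_compl_iff, hA, mem_setOf_eq, not_forall] at hz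
    obtain ⟨W, hW, hzW, hWU⟩ := hz
    exact ⟨W, fun w hw hwA => hWU (hwA W hW hw), hW, hzW⟩
  refine ⟨⟨A, hAc⟩, le_nhds_iff.2 ⟨fun W hW hAW => ?_, fun K hK hAK => ?_⟩⟩
  · obtain ⟨z, hzA, hzW⟩ := hAW
    exact hzA W hW hzW
  · -- each z ∈ K has an open nbhd W_z with the "hit" set not in U
    have key : ∀ z ∈ K, ∃ W : Set Z, IsOpen W ∧ z ∈ W ∧
        {F : HClosed Z | ((F : Set Z) ∩ W) = ∅} ∈ U := by
      intro z hz
      have hzA : z ∉ A := fun h => by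
        have : z ∈ A ∩ K := ⟨h, hz⟩
        rw [hAK] at this; exact this
      simp only [hA, mem_setOf_eq, not_forall] at hzA
      obtain ⟨W, hW, hzW, hWU⟩ := hzA
      refine ⟨W, hW, hzW, ?_⟩
      have := (Ultrafilter.compl_mem_iff_notMem (s := {F : HClosed Z | ((F : Set Z) ∩ W).Nonempty})).2 hWU
      convert this using 1
      ext F
      simp [Set.not_nonempty_iff_eq_empty]
    choose! W hWopen hWmem hWU using key
    have hcover : K ⊆ ⋃ z ∈ K, W z := fun z hz => mem_biUnion hz (hWmem z hz)
    obtain ⟨t, hts, htcover⟩ := hK.elim_finite_subcover_image (fun z hz => hWopen z hz) hcover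
    have hfin : (⋂ z ∈ t, {F : HClosed Z | ((F : Set Z) ∩ W z) = ∅}) ∈ U :=
      (Filter.biInter_mem htcover.1).2 fun z hz => hWU z (hts hz)
    refine Filter.mem_of_superset hfin ?_
    intro F hF
    simp only [mem_iInter, mem_setOf_eq] at hF ⊢
    rw [Set.eq_empty_iff_forall_notMem]
    rintro w ⟨hwF, hwK⟩
    obtain ⟨_, ⟨z, rfl⟩, hmem⟩ := htcover.2 hwK
    simp only [mem_iUnion] at hmem
    obtain ⟨hzt, hwW⟩ := hmem
    have := hF z hzt
    rw [Set.eq_empty_iff_forall_notMem] at this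
    exact this w ⟨hwF, hwW⟩

/-- The Fell topology is Hausdorff when the base space is locally compact Hausdorff. -/
lemma t2 [T2Space Z] [LocallyCompactSpace Z] : @T2Space (HClosed Z) (fellTop Z) := by
  letI := fellTop Z
  have sep : ∀ A B : HClosed Z, ∀ z : Z, z ∈ (A : Set Z) → z ∉ (B : Set Z) →
      ∃ u v : Set (HClosed Z), IsOpen u ∧ IsOpen v ∧ A ∈ u ∧ B ∈ v ∧ Disjoint u v := by
    intro A B z hzA hzB
    obtain ⟨K, hKnhds, hKsub, hKcomp⟩ := local_compact_nhds (show (B : Set Z)ᶜ ∈ 𝓝 z from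
      B.2.isOpen_compl.mem_nhds hzB)
    refine ⟨{F : HClosed Z | ((F : Set Z) ∩ interior K).Nonempty},
      {F : HClosed Z | (F : Set Z) ∩ K = ∅},
      isOpen_generateFrom_of_mem (Or.inl ⟨interior K, isOpen_interior, rfl⟩),
      isOpen_generateFrom_of_mem (Or.inr ⟨K, hKcomp, rfl⟩),
      ⟨z, hzA, mem_interior_iff_mem_nhds.2 hKnhds⟩, ?_, ?_⟩
    · show (B : Set Z) ∩ K = ∅
      rw [Set.eq_empty_iff_forall_notMem]
      rintro w ⟨hwB, hwK⟩
      exact hKsub hwK hwB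
    · rw [Set.disjoint_left]
      rintro F ⟨w, hwF, hwi⟩ hFK
      have hFK' : (F : Set Z) ∩ K = ∅ := hFK
      rw [Set.eq_empty_iff_forall_notMem] at hFK'
      exact hFK' w ⟨hwF, interior_subset hwi⟩
  constructor
  intro A B hAB
  have hne : (A : Set Z) ≠ (B : Set Z) := fun h => hAB (Subtype.ext h)
  have : ¬ ((A : Set Z) ⊆ (B : Set Z) ∧ (B : Set Z) ⊆ (A : Set Z)) := by
    rintro ⟨h1, h2⟩; exact hne (le_antisymm h1 h2)
  rw [not_and_or] at this
  rcases this with h | h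
  · obtain ⟨z, hzA, hzB⟩ := Set.not_subset.1 h
    exact sep A B z hzA hzB
  · obtain ⟨z, hzB, hzA⟩ := Set.not_subset.1 h
    obtain ⟨u, v, hu, hv, hBu, hAv, hd⟩ := sep B A z hzB hzA
    exact ⟨v, u, hv, hu, hAv, hBu, hd.symm⟩

end FellAux

namespace FellAux
variable {Z Z' : Type*} [TopologicalSpace Z] [TopologicalSpace Z']

def restr {e : Z' → Z} (he : Continuous e) (R : HClosed Z) : HClosed Z' :=
  ⟨e ⁻¹' (R : Set Z), R.2.preimage he⟩

lemma restr_continuous {e : Z' → Z} (he : Topology.IsOpenEmbedding e) :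
    Continuous[fellTop Z, fellTop Z'] (restr he.continuous) := by
  rw [fellTop, fellTop, continuous_generateFrom_iff]
  rintro s (⟨W, hW, rfl⟩ | ⟨K, hK, rfl⟩)
  · have heq : restr he.continuous ⁻¹' {A : HClosed Z' | ((A : Set Z') ∩ W).Nonempty}
        = {A : HClosed Z | ((A : Set Z) ∩ (e '' W)).Nonempty} := by
      ext R
      constructor
      · rintro ⟨p, hp, hpW⟩; exact ⟨e p, hp, p, hpW, rfl⟩
      · rintro ⟨y, hy, p, hpW, rfl⟩; exact ⟨p, hy, hpW⟩
    rw [heq]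
    exact isOpen_generateFrom_of_mem (Or.inl ⟨e '' W, he.isOpenMap W hW, rfl⟩)
  · have heq : restr he.continuous ⁻¹' {A : HClosed Z' | (A : Set Z') ∩ K = ∅}
        = {A : HClosed Z | (A : Set Z) ∩ (e '' K) = ∅} := by
      ext R
      simp only [mem_preimage, mem_setOf_eq, Set.eq_empty_iff_forall_notMem]
      constructor
      · rintro h y ⟨hyR, p, hpK, rfl⟩; exact h p ⟨hyR, hpK⟩
      · rintro h p ⟨hpR, hpK⟩; exact h (e p) ⟨hpR, p, hpK, rfl⟩
    rw [heq]
    exact isOpen_generateFrom_of_mem (Or.inr ⟨e '' K, hK.image he.continuous, rfl⟩)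

end FellAux

/-- For a locally compact Hausdorff `G`-space `Y` with an open invariant subset `X` on which the
action is faithful, the graph map `ι_X` into the Fell hyperspace of `X × X` is a topological
embedding iff condition (R) holds: for every `g ∈ G` and every `R` in the closure of the graphs
in the Fell hyperspace of `Y × Y`, `R ∩ (X × X) = Γ_Y(g) ∩ (X × X)` implies `R = Γ_Y(g)`. -/
theorem stmt_9 {Y G : Type*} [TopologicalSpace Y] [T2Space Y] [LocallyCompactSpace Y]
    [Group G] [MulAction G Y]
    (hgY : ∀ g : G, Continuous fun y : Y => g • y)
    (X : Set Y) (hXopen : IsOpen X)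
    (hinv : ∀ g : G, (fun y : Y => g • y) '' X = X)
    (hfaith : ∀ g h : G, (∀ y ∈ X, g • y = h • y) → g = h)
    (ιY : G → HClosed (Y × Y))
    (hιY : ∀ g : G, (ιY g : Set (Y × Y)) = {p : Y × Y | p.2 = g • p.1})
    (ιX : G → HClosed (X × X))
    (hιX : ∀ g : G, (ιX g : Set (X × X)) =
      {p : X × X | (p.2 : Y) = g • (p.1 : Y)})
    (τ : TopologicalSpace G)
    (hemb : @IsEmbedding _ _ τ (fellTop (Y × Y)) ιY) :
    @IsEmbedding _ _ τ (fellTop (X × X)) ιX ↔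
      ∀ g : G, ∀ R ∈ @closure _ (fellTop (Y × Y)) (Set.range ιY),
        (R : Set (Y × Y)) ∩ X ×ˢ X = (ιY g : Set (Y × Y)) ∩ X ×ˢ X → R = ιY g := by
  letI : TopologicalSpace G := τ
  letI : TopologicalSpace (HClosed (Y × Y)) := fellTop (Y × Y)
  letI : TopologicalSpace (HClosed (↥X × ↥X)) := fellTop (↥X × ↥X)
  haveI : LocallyCompactSpace ↥X := hXopen.locallyCompactSpace
  haveI : T2Space (HClosed (Y × Y)) := FellAux.t2
  haveI : T2Space (HClosed (↥X × ↥X)) := FellAux.t2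
  set e : ↥X × ↥X → Y × Y := Prod.map Subtype.val Subtype.val with he_def
  have he : Topology.IsOpenEmbedding e :=
    (hXopen.isOpenEmbedding_subtypeVal).prodMap hXopen.isOpenEmbedding_subtypeVal
  have hrange : Set.range e = X ×ˢ X := by
    rw [he_def, Set.range_prodMap, Subtype.range_coe]
  have hr : Continuous (FellAux.restr he.continuous) := FellAux.restr_continuous he
  have hcomm : ∀ g : G, ιX g = FellAux.restr he.continuous (ιY g) := by
    intro g
    apply Subtype.ext
    show (ιX g : Set (↥X × ↥X)) = e ⁻¹' (ιY g : Set (Y × Y))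
    rw [hιX, hιY]
    rfl
  have preim_eq : ∀ R S : HClosed (Y × Y),
      e ⁻¹' (R : Set (Y × Y)) = e ⁻¹' (S : Set (Y × Y)) ↔
        (R : Set (Y × Y)) ∩ X ×ˢ X = (S : Set (Y × Y)) ∩ X ×ˢ X := by
    intro R S
    constructor
    · intro h
      have := congrArg (fun t => e '' t) h
      simpa only [Set.image_preimage_eq_inter_range, hrange] using this
    · intro h
      have := congrArg (fun t => e ⁻¹' t) h
      simpa only [Set.preimage_inter, ← hrange, Set.preimage_range, Set.inter_univ] using this
  have hmapmap : ∀ (V : Filter G),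
      Filter.map (FellAux.restr he.continuous) (Filter.map ιY V) = Filter.map ιX V := by
    intro V
    rw [Filter.map_map]
    congr 1
    funext g
    exact (hcomm g).symm
  constructor
  · intro hembX g R hcl hR
    obtain ⟨U, hU, hUle⟩ := mem_closure_iff_ultrafilter.1 hcl
    have hrR : FellAux.restr he.continuous R = ιX g := by
      apply Subtype.ext
      show e ⁻¹' (R : Set (Y × Y)) = (ιX g : Set (↥X × ↥X))
      rw [hcomm g]
      exact (preim_eq R (ιY g)).2 hR
    set V : Filter G := Filter.comap ιY ↑U with hV_def
    haveI : V.NeBot := U.neBot.comap_of_range_mem hU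
    have hmapV : Filter.map ιY V = ↑U := Filter.map_comap_of_mem hU
    have h1 : Filter.map ιX V ≤ 𝓝 (ιX g) := by
      rw [← hmapmap V, hmapV, ← hrR]
      exact (Filter.map_mono hUle).trans (hr.tendsto R)
    have h2 : V ≤ 𝓝 g := by
      rw [hembX.isInducing.nhds_eq_comap g]
      exact Filter.map_le_iff_le_comap.1 h1
    have h3 : ↑U ≤ 𝓝 (ιY g) := by
      rw [← hmapV]
      exact (Filter.map_mono h2).trans (hemb.continuous.tendsto g)
    exact tendsto_nhds_unique (Filter.tendsto_id'.2 hUle) (Filter.tendsto_id'.2 h3)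
  · intro hcond
    have hcont : Continuous ιX := by
      have : ιX = (FellAux.restr he.continuous) ∘ ιY := funext hcomm
      rw [this]
      exact hr.comp hemb.continuous
    have hinj : Function.Injective ιX := by
      intro g h hgh
      apply hfaith
      intro y hy
      have hgy : g • y ∈ X := by
        rw [← hinv g]; exact ⟨y, hy, rfl⟩
      have hp : ((⟨y, hy⟩, ⟨g • y, hgy⟩) : ↥X × ↥X) ∈ (ιX g : Set (↥X × ↥X)) := by
        rw [hιX]; exact rfl
      rw [hgh, hιX] at hp
      exact hp
    refine ⟨isInducing_iff_nhds.2 fun g => le_antisymm ?_ ?_, hinj⟩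
    · exact Filter.map_le_iff_le_comap.1 (hcont.tendsto g)
    · rw [le_iff_ultrafilter]
      intro V hV
      have hVle : Filter.map ιX ↑V ≤ 𝓝 (ιX g) := Filter.map_le_iff_le_comap.2 hV
      obtain ⟨R, hRle⟩ := FellAux.exists_ultrafilter_le_nhds (V.map ιY)
      have hRle' : Filter.map ιY ↑V ≤ 𝓝 R := hRle
      have hclR : R ∈ closure (Set.range ιY) :=
        mem_closure_iff_ultrafilter.2 ⟨V.map ιY, Filter.range_mem_map, hRle⟩
      have hrReq : FellAux.restr he.continuous R = ιX g := by
        refine tendsto_nhds_unique (f := FellAux.restr he.continuous)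
          (l := Filter.map ιY ↑V) ((hr.tendsto R).mono_left hRle') ?_
        show Filter.map (FellAux.restr he.continuous) (Filter.map ιY ↑V) ≤ 𝓝 (ιX g)
        rw [hmapmap]
        exact hVle
      have hReq : R = ιY g := by
        apply hcond g R hclR
        apply (preim_eq R (ιY g)).1
        have : (FellAux.restr he.continuous R : Set (↥X × ↥X)) =
            (FellAux.restr he.continuous (ιY g) : Set (↥X × ↥X)) := by
          rw [hrReq, hcomm g]
        exact this
      rw [hemb.isInducing.nhds_eq_comap g]
      apply Filter.map_le_iff_le_comap.1
      rw [← hReq]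
      exact hRle'
end

section
/- Let X be a locally compact Hausdorff space and G a group of homeomorphisms of X such that the family {g : X → X | g ∈ G} is topologically equicontinuous. Let αX = X ∪ {∞} be the one-point compactification and for g ∈ G let ĝ be its extension to αX with ĝ(∞) = ∞. Then for any R, S in the closure of {Γ(ĝ) : g ∈ G} in the hyperspace of closed subsets of αX × αX with the Vietoris topology, R ∩ (X × X) = S ∩ (X × X) implies R = S. -/
/-- A family of self-maps of `X` is topologically equicontinuous if for all `x, y ∈ X` and every
open `O ∋ y` there are open sets `U ∋ x`, `V ∋ y` such that for every member `f` of the family,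
`f(U) ∩ V ≠ ∅` implies `f(U) ⊆ O`. -/
def TopEquicontinuous {X : Type*} [TopologicalSpace X] (F : Set (X → X)) : Prop :=
  ∀ (x y : X) (O : Set X), IsOpen O → y ∈ O →
    ∃ U V : Set X, IsOpen U ∧ x ∈ U ∧ IsOpen V ∧ y ∈ V ∧
      ∀ f ∈ F, (f '' U ∩ V).Nonempty → f '' U ⊆ O

/-- If a group `G` of homeomorphisms of a locally compact Hausdorff space `X` is topologically
equicontinuous, then two members of the closure (in the Vietoris hyperspace of `αX × αX`) of the
graphs of the extensions `ĝ` to the one-point compactification that agree on `X × X` are equal. -/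
theorem stmt_10 {X : Type*} [TopologicalSpace X] [T2Space X] [LocallyCompactSpace X]
    (G : Subgroup (Equiv.Perm X))
    (hhomeo : ∀ g : G, Continuous ⇑(g : Equiv.Perm X))
    (hequi : TopEquicontinuous {f : X → X | ∃ g : G, f = ⇑(g : Equiv.Perm X)})
    (ι : G → HClosed (OnePoint X × OnePoint X))
    (hι : ∀ g : G, (ι g : Set (OnePoint X × OnePoint X)) =
      {p : OnePoint X × OnePoint X |
        (p.1 = OnePoint.infty ∧ p.2 = OnePoint.infty) ∨
        ∃ x : X, p.1 = (x : OnePoint X) ∧ p.2 = (((g : Equiv.Perm X) x : X) : OnePoint X)})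
    (R S : HClosed (OnePoint X × OnePoint X))
    (hR : R ∈ @closure _ (vietorisTop (OnePoint X × OnePoint X)) (Set.range ι))
    (hS : S ∈ @closure _ (vietorisTop (OnePoint X × OnePoint X)) (Set.range ι))
    (hRS : (R : Set (OnePoint X × OnePoint X)) ∩
        {p | p.1 ≠ OnePoint.infty ∧ p.2 ≠ OnePoint.infty} =
      (S : Set (OnePoint X × OnePoint X)) ∩
        {p | p.1 ≠ OnePoint.infty ∧ p.2 ≠ OnePoint.infty}) :
    R = S := by
  classical
  set Z := (OnePoint X × OnePoint X)
  letI : TopologicalSpace (HClosed Z) := vietorisTop Z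
  -- subbasic open sets
  have hsub1 : ∀ W : Set Z, IsOpen W →
      IsOpen {A : HClosed Z | ((A : Set Z) ∩ W).Nonempty} := fun W hW =>
    TopologicalSpace.isOpen_generateFrom_of_mem (Or.inl ⟨W, hW, rfl⟩)
  have hsub2 : ∀ W : Set Z, IsOpen W →
      IsOpen {A : HClosed Z | (A : Set Z) ⊆ W} := fun W hW =>
    TopologicalSpace.isOpen_generateFrom_of_mem (Or.inr ⟨W, hW, rfl⟩)
  -- two Vietoris "hit" sets
  have L2 : ∀ T : HClosed Z, T ∈ closure (Set.range ι) →
      ∀ W1 W2 : Set Z, IsOpen W1 → IsOpen W2 →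
      ((T : Set Z) ∩ W1).Nonempty → ((T : Set Z) ∩ W2).Nonempty →
      ∃ g : G, ((ι g : Set Z) ∩ W1).Nonempty ∧ ((ι g : Set Z) ∩ W2).Nonempty := by
    intro T hT W1 W2 h1 h2 hn1 hn2
    have hopen : IsOpen ({A : HClosed Z | ((A : Set Z) ∩ W1).Nonempty} ∩
        {A : HClosed Z | ((A : Set Z) ∩ W2).Nonempty}) := (hsub1 W1 h1).inter (hsub1 W2 h2)
    obtain ⟨A, ⟨hA1, hA2⟩, g, rfl⟩ := mem_closure_iff.mp hT _ hopen ⟨hn1, hn2⟩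
    exact ⟨g, hA1, hA2⟩
  -- compact hitting
  have L1 : ∀ T : HClosed Z, T ∈ closure (Set.range ι) →
      ∀ K : Set Z, IsCompact K → (∀ g : G, ((ι g : Set Z) ∩ K).Nonempty) →
      ((T : Set Z) ∩ K).Nonempty := by
    intro T hT K hK hall
    by_contra hdisj
    have hdis : Disjoint K (T : Set Z) := by
      rw [Set.disjoint_iff_inter_eq_empty, Set.inter_comm]
      exact Set.not_nonempty_iff_eq_empty.mp hdisj
    obtain ⟨U, V, hU, hV, hKU, hTV, hUV⟩ :=
      SeparatedNhds.of_isCompact_isCompact hK T.2.isCompact hdis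
    obtain ⟨A, hAV, g, rfl⟩ := mem_closure_iff.mp hT _ (hsub2 V hV) hTV
    obtain ⟨p, hpg, hpK⟩ := hall g
    exact Set.disjoint_left.mp hUV (hKU hpK) (hAV hpg)
  -- basic membership facts about the graphs
  have hmem_inf : ∀ g : G, (OnePoint.infty, OnePoint.infty) ∈ (ι g : Set Z) := by
    intro g; rw [hι g]; exact Or.inl ⟨rfl, rfl⟩
  have hmem_pair : ∀ (g : G) (x : X),
      (((x : OnePoint X), (((g : Equiv.Perm X) x : X) : OnePoint X)) : Z) ∈ (ι g : Set Z) := by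
    intro g x; rw [hι g]; exact Or.inr ⟨x, rfl, rfl⟩
  -- rows and columns of closure elements are nonempty
  have hrow : ∀ T : HClosed Z, T ∈ closure (Set.range ι) →
      ∀ a : OnePoint X, ∃ b : OnePoint X, ((a, b) : Z) ∈ (T : Set Z) := by
    intro T hT a
    have hK : IsCompact ({a} ×ˢ (Set.univ : Set (OnePoint X))) :=
      isCompact_singleton.prod isCompact_univ
    have hall : ∀ g : G, ((ι g : Set Z) ∩ {a} ×ˢ (Set.univ : Set (OnePoint X))).Nonempty := by
      intro g
      rcases a with _ | u
      · exact ⟨(OnePoint.infty, OnePoint.infty), hmem_inf g, rfl, trivial⟩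
      · exact ⟨((u : OnePoint X), (((g : Equiv.Perm X) u : X) : OnePoint X)),
          hmem_pair g u, rfl, trivial⟩
    obtain ⟨p, hpT, hp1, -⟩ := L1 T hT _ hK hall
    exact ⟨p.2, by rwa [show ((a, p.2) : Z) = p from Prod.ext hp1.symm rfl]⟩
  have hcol : ∀ T : HClosed Z, T ∈ closure (Set.range ι) →
      ∀ b : OnePoint X, ∃ a : OnePoint X, ((a, b) : Z) ∈ (T : Set Z) := by
    intro T hT b
    have hK : IsCompact ((Set.univ : Set (OnePoint X)) ×ˢ {b}) :=
      isCompact_univ.prod isCompact_singleton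
    have hall : ∀ g : G, ((ι g : Set Z) ∩ (Set.univ : Set (OnePoint X)) ×ˢ {b}).Nonempty := by
      intro g
      rcases b with _ | u
      · exact ⟨(OnePoint.infty, OnePoint.infty), hmem_inf g, trivial, rfl⟩
      · refine ⟨((((g : Equiv.Perm X).symm u : X) : OnePoint X), (u : OnePoint X)), ?_, trivial, rfl⟩
        have := hmem_pair g ((g : Equiv.Perm X).symm u)
        rwa [Equiv.apply_symm_apply] at this
    obtain ⟨p, hpT, -, hp2⟩ := L1 T hT _ hK hall
    exact ⟨p.1, by rwa [show ((p.1, b) : Z) = p from Prod.ext rfl (by exact hp2.symm)]⟩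
  have hinfinf : ∀ T : HClosed Z, T ∈ closure (Set.range ι) →
      ((OnePoint.infty, OnePoint.infty) : Z) ∈ (T : Set Z) := by
    intro T hT
    obtain ⟨p, hpT, hp⟩ := L1 T hT {((OnePoint.infty, OnePoint.infty) : Z)}
      isCompact_singleton (fun g => ⟨_, hmem_inf g, rfl⟩)
    rwa [Set.mem_singleton_iff.mp hp] at hpT
  -- Claim H : a point (x, y) with finite coordinates excludes (x, ∞)
  have clH : ∀ T : HClosed Z, T ∈ closure (Set.range ι) → ∀ x y : X,
      (((x : OnePoint X), (y : OnePoint X)) : Z) ∈ (T : Set Z) →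
      (((x : OnePoint X), OnePoint.infty) : Z) ∉ (T : Set Z) := by
    intro T hT x y hxy hxinf
    obtain ⟨O', Tinf, hO'o, hTo, hyO', hinfT, hdisjOT⟩ :=
      t2_separation (OnePoint.coe_ne_infty y)
    obtain ⟨U, V, hU, hxU, hV, hyV, hcontrol⟩ := hequi x y
      ((fun x : X => (x : OnePoint X)) ⁻¹' O') (hO'o.preimage OnePoint.continuous_coe) hyO'
    have hW1 : IsOpen (((fun x : X => (x : OnePoint X)) '' U) ×ˢ
        ((fun x : X => (x : OnePoint X)) '' V)) :=
      (OnePoint.isOpenMap_coe U hU).prod (OnePoint.isOpenMap_coe V hV)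
    have hW2 : IsOpen (((fun x : X => (x : OnePoint X)) '' U) ×ˢ Tinf) :=
      (OnePoint.isOpenMap_coe U hU).prod hTo
    obtain ⟨g, ⟨q1, hq1g, hq1U, hq1V⟩, ⟨q2, hq2g, hq2U, hq2T⟩⟩ :=
      L2 T hT _ _ hW1 hW2 ⟨_, hxy, ⟨x, hxU, rfl⟩, ⟨y, hyV, rfl⟩⟩
        ⟨_, hxinf, ⟨x, hxU, rfl⟩, hinfT⟩
    -- analyze q1
    obtain ⟨u, huU, hu⟩ := hq1U
    have hq1 : q1.2 = (((g : Equiv.Perm X) u : X) : OnePoint X) := by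
      rw [hι g] at hq1g
      rcases hq1g with ⟨h1, -⟩ | ⟨a, ha1, ha2⟩
      · exact absurd (hu.trans h1) (OnePoint.coe_ne_infty u)
      · have : a = u := OnePoint.coe_injective (ha1.symm.trans hu.symm)
        rw [ha2, this]
    obtain ⟨v, hvV, hv⟩ := hq1V
    have hval : (g : Equiv.Perm X) u = v := OnePoint.coe_injective (hq1.symm.trans hv.symm)
    have hginF : ⇑(g : Equiv.Perm X) ∈ {f : X → X | ∃ g : G, f = ⇑(g : Equiv.Perm X)} :=
      ⟨g, rfl⟩
    have hgsub : ⇑(g : Equiv.Perm X) '' U ⊆ (fun x : X => (x : OnePoint X)) ⁻¹' O' :=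
      hcontrol _ hginF ⟨v, ⟨u, huU, hval⟩, hvV⟩
    -- analyze q2
    obtain ⟨w, hwU, hw⟩ := hq2U
    have hq2 : q2.2 = (((g : Equiv.Perm X) w : X) : OnePoint X) := by
      rw [hι g] at hq2g
      rcases hq2g with ⟨h1, -⟩ | ⟨a, ha1, ha2⟩
      · exact absurd (hw.trans h1) (OnePoint.coe_ne_infty w)
      · have : a = w := OnePoint.coe_injective (ha1.symm.trans hw.symm)
        rw [ha2, this]
    have : ((((g : Equiv.Perm X) w : X) : OnePoint X)) ∈ O' :=
      hgsub ⟨w, hwU, rfl⟩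
    exact Set.disjoint_left.mp hdisjOT this (hq2 ▸ hq2T)
  -- Claim V : a point (x, y) with finite coordinates excludes (∞, y)
  have clV : ∀ T : HClosed Z, T ∈ closure (Set.range ι) → ∀ x y : X,
      (((x : OnePoint X), (y : OnePoint X)) : Z) ∈ (T : Set Z) →
      ((OnePoint.infty, (y : OnePoint X)) : Z) ∉ (T : Set Z) := by
    intro T hT x y hxy hyinf
    obtain ⟨O', Tinf, hO'o, hTo, hxO', hinfT, hdisjOT⟩ :=
      t2_separation (OnePoint.coe_ne_infty x)
    obtain ⟨U, V, hU, hyU, hV, hxV, hcontrol⟩ := hequi y x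
      ((fun x : X => (x : OnePoint X)) ⁻¹' O') (hO'o.preimage OnePoint.continuous_coe) hxO'
    have hW1 : IsOpen (((fun x : X => (x : OnePoint X)) '' V) ×ˢ
        ((fun x : X => (x : OnePoint X)) '' U)) :=
      (OnePoint.isOpenMap_coe V hV).prod (OnePoint.isOpenMap_coe U hU)
    have hW2 : IsOpen (Tinf ×ˢ ((fun x : X => (x : OnePoint X)) '' U)) :=
      hTo.prod (OnePoint.isOpenMap_coe U hU)
    obtain ⟨g, ⟨q1, hq1g, hq1V, hq1U⟩, ⟨q2, hq2g, hq2T, hq2U⟩⟩ :=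
      L2 T hT _ _ hW1 hW2 ⟨_, hxy, ⟨x, hxV, rfl⟩, ⟨y, hyU, rfl⟩⟩
        ⟨_, hyinf, hinfT, ⟨y, hyU, rfl⟩⟩
    -- the inverse is also in the family
    have hginF : ⇑((g⁻¹ : G) : Equiv.Perm X) ∈
        {f : X → X | ∃ g : G, f = ⇑(g : Equiv.Perm X)} := ⟨g⁻¹, rfl⟩
    have hinv : ((g⁻¹ : G) : Equiv.Perm X) = ((g : Equiv.Perm X))⁻¹ := rfl
    -- analyze q1
    obtain ⟨v, hvV, hv⟩ := hq1V
    have hq1 : q1.2 = (((g : Equiv.Perm X) v : X) : OnePoint X) := by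
      rw [hι g] at hq1g
      rcases hq1g with ⟨h1, -⟩ | ⟨a, ha1, ha2⟩
      · exact absurd (hv.trans h1) (OnePoint.coe_ne_infty v)
      · have : a = v := OnePoint.coe_injective (ha1.symm.trans hv.symm)
        rw [ha2, this]
    obtain ⟨u, huU, hu⟩ := hq1U
    have hval : (g : Equiv.Perm X) v = u := OnePoint.coe_injective (hq1.symm.trans hu.symm)
    have hmemint : (⇑((g⁻¹ : G) : Equiv.Perm X) '' U ∩ V).Nonempty := by
      refine ⟨v, ⟨u, huU, ?_⟩, hvV⟩
      rw [hinv, ← hval]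
      exact Equiv.symm_apply_apply _ _
    have hgsub : ⇑((g⁻¹ : G) : Equiv.Perm X) '' U ⊆
        (fun x : X => (x : OnePoint X)) ⁻¹' O' := hcontrol _ hginF hmemint
    -- analyze q2
    obtain ⟨w, hwU, hw⟩ := hq2U
    have hq2 : ∃ b : X, q2.1 = (b : OnePoint X) ∧ (g : Equiv.Perm X) b = w := by
      rw [hι g] at hq2g
      rcases hq2g with ⟨-, h2⟩ | ⟨a, ha1, ha2⟩
      · exact absurd (hw.trans h2) (OnePoint.coe_ne_infty w)
      · exact ⟨a, ha1, OnePoint.coe_injective (ha2.symm.trans hw.symm)⟩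
    obtain ⟨b, hb1, hb2⟩ := hq2
    have hbO : ((b : OnePoint X)) ∈ O' := by
      refine hgsub ⟨w, hwU, ?_⟩
      rw [hinv, ← hb2]
      exact Equiv.symm_apply_apply _ _
    exact Set.disjoint_left.mp hdisjOT hbO (hb1 ▸ hq2T)
  -- the main argument
  have main : ∀ T T' : HClosed Z, T ∈ closure (Set.range ι) → T' ∈ closure (Set.range ι) →
      (T : Set Z) ∩ {p : Z | p.1 ≠ OnePoint.infty ∧ p.2 ≠ OnePoint.infty} =
        (T' : Set Z) ∩ {p : Z | p.1 ≠ OnePoint.infty ∧ p.2 ≠ OnePoint.infty} →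
      (T : Set Z) ⊆ (T' : Set Z) := by
    intro T T' hT hT' hTT' p hp
    obtain ⟨a, b⟩ := p
    rcases (show a = OnePoint.infty ∨ ∃ u : X, a = (u : OnePoint X) by
        rcases a with _ | u; exacts [Or.inl rfl, Or.inr ⟨u, rfl⟩]) with ha | ⟨u, rfl⟩
    · rcases (show b = OnePoint.infty ∨ ∃ v : X, b = (v : OnePoint X) by
          rcases b with _ | v; exacts [Or.inl rfl, Or.inr ⟨v, rfl⟩]) with hb | ⟨v, rfl⟩
      · subst ha; subst hb; exact hinfinf T' hT'
      · subst ha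
        obtain ⟨a', ha'⟩ := hcol T' hT' (v : OnePoint X)
        rcases (show a' = OnePoint.infty ∨ ∃ w : X, a' = (w : OnePoint X) by
            rcases a' with _ | w; exacts [Or.inl rfl, Or.inr ⟨w, rfl⟩]) with h | ⟨w, rfl⟩
        · rwa [h] at ha'
        · have hwT : (((w : OnePoint X), (v : OnePoint X)) : Z) ∈ (T : Set Z) := by
            have : (((w : OnePoint X), (v : OnePoint X)) : Z) ∈ (T' : Set Z) ∩
                {p : Z | p.1 ≠ OnePoint.infty ∧ p.2 ≠ OnePoint.infty} :=
              ⟨ha', OnePoint.coe_ne_infty w, OnePoint.coe_ne_infty v⟩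
            rw [← hTT'] at this
            exact this.1
          exact absurd hp (clV T hT w v hwT)
    · rcases (show b = OnePoint.infty ∨ ∃ v : X, b = (v : OnePoint X) by
          rcases b with _ | v; exacts [Or.inl rfl, Or.inr ⟨v, rfl⟩]) with hb | ⟨v, rfl⟩
      · subst hb
        obtain ⟨b', hb'⟩ := hrow T' hT' (u : OnePoint X)
        rcases (show b' = OnePoint.infty ∨ ∃ w : X, b' = (w : OnePoint X) by
            rcases b' with _ | w; exacts [Or.inl rfl, Or.inr ⟨w, rfl⟩]) with h | ⟨w, rfl⟩
        · rwa [h] at hb'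
        · have hwT : (((u : OnePoint X), (w : OnePoint X)) : Z) ∈ (T : Set Z) := by
            have : (((u : OnePoint X), (w : OnePoint X)) : Z) ∈ (T' : Set Z) ∩
                {p : Z | p.1 ≠ OnePoint.infty ∧ p.2 ≠ OnePoint.infty} :=
              ⟨hb', OnePoint.coe_ne_infty u, OnePoint.coe_ne_infty w⟩
            rw [← hTT'] at this
            exact this.1
          exact absurd hp (clH T hT u w hwT)
      · have : (((u : OnePoint X), (v : OnePoint X)) : Z) ∈ (T' : Set Z) ∩
            {p : Z | p.1 ≠ OnePoint.infty ∧ p.2 ≠ OnePoint.infty} := by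
          rw [← hTT']
          exact ⟨hp, OnePoint.coe_ne_infty u, OnePoint.coe_ne_infty v⟩
        exact this.1
  exact Subtype.ext (Set.Subset.antisymm (main R S hR hS hRS) (main S R hS hR hRS.symm))
end

section
/- Let X be a locally compact, locally connected Hausdorff space and G a group of homeomorphisms of X. Let αX = X ∪ {∞} be the one-point compactification and for g ∈ G let ĝ be its extension to αX with ĝ(∞) = ∞. Then for any R, S in the closure of {Γ(ĝ) : g ∈ G} in the hyperspace of closed subsets of αX × αX with the Vietoris topology, R ∩ (X × X) = S ∩ (X × X) implies R = S. -/
open OnePoint Set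
set_option linter.unusedSectionVars false
set_option maxHeartbeats 1000000

lemma vietoris_approx0 {Z : Type*} [TopologicalSpace Z] {s : Set (HClosed Z)} {T : HClosed Z}
    (hT : T ∈ @closure _ (vietorisTop Z) s) {W : Set Z} (hW : IsOpen W)
    (hTW : (T : Set Z) ⊆ W) :
    ∃ A ∈ s, (A : Set Z) ⊆ W := by
  letI := vietorisTop Z
  have hN : IsOpen {A : HClosed Z | (A : Set Z) ⊆ W} :=
    TopologicalSpace.isOpen_generateFrom_of_mem (Or.inr ⟨W, hW, rfl⟩)
  obtain ⟨A, hAN, hAs⟩ := mem_closure_iff.mp hT _ hN hTW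
  exact ⟨A, hAs, hAN⟩

lemma vietoris_approx2 {Z : Type*} [TopologicalSpace Z] {s : Set (HClosed Z)} {T : HClosed Z}
    (hT : T ∈ @closure _ (vietorisTop Z) s) {W O₁ O₂ : Set Z} (hW : IsOpen W)
    (hTW : (T : Set Z) ⊆ W) (hO₁ : IsOpen O₁) (hTO₁ : ((T : Set Z) ∩ O₁).Nonempty)
    (hO₂ : IsOpen O₂) (hTO₂ : ((T : Set Z) ∩ O₂).Nonempty) :
    ∃ A ∈ s, (A : Set Z) ⊆ W ∧ ((A : Set Z) ∩ O₁).Nonempty ∧ ((A : Set Z) ∩ O₂).Nonempty := by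
  letI := vietorisTop Z
  have h1 : IsOpen {A : HClosed Z | (A : Set Z) ⊆ W} :=
    TopologicalSpace.isOpen_generateFrom_of_mem (Or.inr ⟨W, hW, rfl⟩)
  have h2 : IsOpen {A : HClosed Z | ((A : Set Z) ∩ O₁).Nonempty} :=
    TopologicalSpace.isOpen_generateFrom_of_mem (Or.inl ⟨O₁, hO₁, rfl⟩)
  have h3 : IsOpen {A : HClosed Z | ((A : Set Z) ∩ O₂).Nonempty} :=
    TopologicalSpace.isOpen_generateFrom_of_mem (Or.inl ⟨O₂, hO₂, rfl⟩)
  obtain ⟨A, hAN, hAs⟩ := mem_closure_iff.mp hT _ ((h1.inter h2).inter h3)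
    ⟨⟨hTW, hTO₁⟩, hTO₂⟩
  exact ⟨A, hAs, hAN.1.1, hAN.1.2, hAN.2⟩

section Main
variable {X : Type*} [TopologicalSpace X] [T2Space X] [LocallyCompactSpace X]
    [LocallyConnectedSpace X]
    {G : Subgroup (Equiv.Perm X)}
    (hhomeo : ∀ g : G, Continuous ⇑(g : Equiv.Perm X))
    {ι : G → HClosed (OnePoint X × OnePoint X)}
    (hι : ∀ g : G, (ι g : Set (OnePoint X × OnePoint X)) =
      {p : OnePoint X × OnePoint X |
        (p.1 = OnePoint.infty ∧ p.2 = OnePoint.infty) ∨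
        ∃ x : X, p.1 = (x : OnePoint X) ∧ p.2 = (((g : Equiv.Perm X) x : X) : OnePoint X)})

include hhomeo hι

lemma mem_row_aux {T : HClosed (OnePoint X × OnePoint X)}
    (hT : T ∈ @closure _ (vietorisTop (OnePoint X × OnePoint X)) (Set.range ι))
    (a : OnePoint X) : ∃ b, (b, a) ∈ (T : Set (OnePoint X × OnePoint X)) := by
  by_contra h
  push_neg at h
  have hW : IsOpen {p : OnePoint X × OnePoint X | p.2 ≠ a} :=
    isOpen_ne.preimage continuous_snd
  have hTW : (T : Set (OnePoint X × OnePoint X)) ⊆ {p | p.2 ≠ a} := by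
    intro p hp hpa
    exact h p.1 (by rw [← hpa]; exact hp)
  obtain ⟨A, ⟨g, rfl⟩, hAW⟩ := vietoris_approx0 hT hW hTW
  induction a using OnePoint.rec with
  | infty =>
    exact hAW (show ((∞ : OnePoint X), (∞ : OnePoint X)) ∈ _ by
      rw [hι g]; exact Or.inl ⟨rfl, rfl⟩) rfl
  | coe z =>
    have : (((((g : Equiv.Perm X).symm z : X)) : OnePoint X),
        ((((g : Equiv.Perm X) ((g : Equiv.Perm X).symm z) : X)) : OnePoint X)) ∈
        (ι g : Set (OnePoint X × OnePoint X)) := by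
      rw [hι g]; exact Or.inr ⟨_, rfl, rfl⟩
    exact hAW this (by simp)

lemma mem_col_aux {T : HClosed (OnePoint X × OnePoint X)}
    (hT : T ∈ @closure _ (vietorisTop (OnePoint X × OnePoint X)) (Set.range ι))
    (a : OnePoint X) : ∃ b, (a, b) ∈ (T : Set (OnePoint X × OnePoint X)) := by
  by_contra h
  push_neg at h
  have hW : IsOpen {p : OnePoint X × OnePoint X | p.1 ≠ a} :=
    isOpen_ne.preimage continuous_fst
  have hTW : (T : Set (OnePoint X × OnePoint X)) ⊆ {p | p.1 ≠ a} := by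
    intro p hp hpa
    exact h p.2 (by rw [← hpa]; exact hp)
  obtain ⟨A, ⟨g, rfl⟩, hAW⟩ := vietoris_approx0 hT hW hTW
  induction a using OnePoint.rec with
  | infty =>
    exact hAW (show ((∞ : OnePoint X), (∞ : OnePoint X)) ∈ _ by
      rw [hι g]; exact Or.inl ⟨rfl, rfl⟩) rfl
  | coe z =>
    have : (((z : X) : OnePoint X),
        ((((g : Equiv.Perm X) z : X)) : OnePoint X)) ∈
        (ι g : Set (OnePoint X × OnePoint X)) := by
      rw [hι g]; exact Or.inr ⟨_, rfl, rfl⟩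
    exact hAW this rfl

lemma mem_infty_pair {T : HClosed (OnePoint X × OnePoint X)}
    (hT : T ∈ @closure _ (vietorisTop (OnePoint X × OnePoint X)) (Set.range ι)) :
    ((∞ : OnePoint X), (∞ : OnePoint X)) ∈ (T : Set (OnePoint X × OnePoint X)) := by
  by_contra h
  have hW : IsOpen ({((∞ : OnePoint X), (∞ : OnePoint X))} : Set (OnePoint X × OnePoint X))ᶜ :=
    isClosed_singleton.isOpen_compl
  have hTW : (T : Set (OnePoint X × OnePoint X)) ⊆ {((∞ : OnePoint X), (∞ : OnePoint X))}ᶜ := by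
    intro p hp hpm
    exact h (by rwa [Set.mem_singleton_iff.mp hpm] at hp)
  obtain ⟨A, ⟨g, rfl⟩, hAW⟩ := vietoris_approx0 hT hW hTW
  exact hAW (show ((∞ : OnePoint X), (∞ : OnePoint X)) ∈ _ by
    rw [hι g]; exact Or.inl ⟨rfl, rfl⟩) rfl

lemma hard_row {R S : HClosed (OnePoint X × OnePoint X)}
    (hR : R ∈ @closure _ (vietorisTop (OnePoint X × OnePoint X)) (Set.range ι))
    (hS : S ∈ @closure _ (vietorisTop (OnePoint X × OnePoint X)) (Set.range ι))
    (hfin : (R : Set (OnePoint X × OnePoint X)) ∩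
        {p | p.1 ≠ OnePoint.infty ∧ p.2 ≠ OnePoint.infty} =
      (S : Set (OnePoint X × OnePoint X)) ∩
        {p | p.1 ≠ OnePoint.infty ∧ p.2 ≠ OnePoint.infty})
    (y : X) (hyR : ((∞ : OnePoint X), (y : OnePoint X)) ∈ (R : Set (OnePoint X × OnePoint X))) :
    ((∞ : OnePoint X), (y : OnePoint X)) ∈ (S : Set (OnePoint X × OnePoint X)) := by
  by_contra hnot
  -- separate (∞, y) from S by a product open set
  obtain ⟨U, V₀, hU, hV₀, hUmem, hV₀mem, hUV⟩ :=
    isOpen_prod_iff.mp S.2.isOpen_compl _ _ hnot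
  -- compact K ⊆ X controlling U near ∞
  obtain ⟨K, ⟨hKcl, hKcomp⟩, hKU⟩ :=
    OnePoint.hasBasis_nhds_infty.mem_iff.mp (hU.mem_nhds hUmem)
  -- connected neighborhood V of y with compact closure inside coe ⁻¹' V₀
  have hyV₀ : y ∈ ((↑) : X → OnePoint X) ⁻¹' V₀ := hV₀mem
  obtain ⟨C, hCn, hCsub, hCcomp⟩ :=
    local_compact_nhds ((hV₀.preimage OnePoint.continuous_coe).mem_nhds hyV₀)
  obtain ⟨V, ⟨hVo, hyV, hVconn⟩, hVC⟩ :=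
    (LocallyConnectedSpace.open_connected_basis y).mem_iff.mp hCn
  have hclVC : closure V ⊆ C := closure_minimal hVC hCcomp.isClosed
  have hclVcomp : IsCompact (closure V) := hCcomp.of_isClosed_subset isClosed_closure hclVC
  -- A, L
  obtain ⟨K', hK'comp, hKint⟩ := exists_compact_superset hKcomp
  set A : Set X := interior K' with hA
  have hAo : IsOpen A := isOpen_interior
  have hKA : K ⊆ A := hKint
  set L : Set X := closure A with hL
  have hLcomp : IsCompact L :=
    hK'comp.of_isClosed_subset isClosed_closure (closure_minimal interior_subset hK'comp.isClosed)
  have hAL : A ⊆ L := subset_closure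
  set cA : Set (OnePoint X) := ((↑) : X → OnePoint X) '' A with hcA
  have hcAo : IsOpen cA := OnePoint.isOpen_image_coe.2 hAo
  set B : Set (OnePoint X) := (((↑) : X → OnePoint X) '' L)ᶜ with hB
  have hBo : IsOpen B := OnePoint.isOpen_compl_image_coe.2 ⟨hLcomp.isClosed, hLcomp⟩
  have hinftyB : (∞ : OnePoint X) ∈ B := OnePoint.infty_notMem_image_coe
  set cV : Set (OnePoint X) := ((↑) : X → OnePoint X) '' closure V with hcV
  have hcVcl : IsClosed cV := OnePoint.isClosed_image_coe.2 ⟨isClosed_closure, hclVcomp⟩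
  set cVo : Set (OnePoint X) := ((↑) : X → OnePoint X) '' V with hcVo
  have hcVoo : IsOpen cVo := OnePoint.isOpen_image_coe.2 hVo
  have hVsub : cVo ⊆ cV := image_mono subset_closure
  -- F1 : points of S whose second coordinate lies in cV have first coordinate in coe '' K
  have hF1 : ∀ p ∈ (S : Set (OnePoint X × OnePoint X)), p.2 ∈ cV →
      p.1 ∈ ((↑) : X → OnePoint X) '' K := by
    intro p hp hp2
    by_contra hp1
    obtain ⟨v, hv, hpv⟩ := hp2
    have h2 : p.2 ∈ V₀ := by rw [← hpv]; exact hCsub (hclVC hv)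
    have h1 : p.1 ∈ U := by
      rcases em (p.1 = ∞) with h | h
      · rw [h]; exact hKU (Or.inr rfl)
      · obtain ⟨x, hx⟩ := OnePoint.ne_infty_iff_exists.mp h
        have hxK : x ∉ K := fun hxK => hp1 ⟨x, hxK, hx⟩
        rw [← hx]; exact hKU (Or.inl ⟨x, hxK, rfl⟩)
    exact hUV ⟨h1, h2⟩ hp
  -- a point of S (hence of R) in the row of y, with first coordinate in K
  obtain ⟨b, hbS⟩ := mem_row_aux hhomeo hι hS (y : OnePoint X)
  obtain ⟨k, hkK, rfl⟩ := hF1 (b, (y : OnePoint X)) hbS ⟨y, subset_closure hyV, rfl⟩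
  have hkR : ((k : OnePoint X), (y : OnePoint X)) ∈ (R : Set (OnePoint X × OnePoint X)) := by
    have hmem : ((k : OnePoint X), (y : OnePoint X)) ∈ (S : Set (OnePoint X × OnePoint X)) ∩
        {p | p.1 ≠ OnePoint.infty ∧ p.2 ≠ OnePoint.infty} :=
      ⟨hbS, OnePoint.coe_ne_infty k, OnePoint.coe_ne_infty y⟩
    rw [← hfin] at hmem
    exact hmem.1
  -- the open set W containing R
  set W : Set (OnePoint X × OnePoint X) := ((cA ∪ B)ᶜ ×ˢ cV)ᶜ with hWdef
  have hWo : IsOpen W := (((hcAo.union hBo).isClosed_compl).prod hcVcl).isOpen_compl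
  have hRW : (R : Set (OnePoint X × OnePoint X)) ⊆ W := by
    intro p hp hpmem
    obtain ⟨hp1, hp2⟩ := hpmem
    apply hp1
    rcases em (p.1 = ∞) with h | h
    · right; rw [h]; exact hinftyB
    · obtain ⟨v, hv, hpv⟩ := hp2
      have hpD : p ∈ (R : Set (OnePoint X × OnePoint X)) ∩
          {q | q.1 ≠ OnePoint.infty ∧ q.2 ≠ OnePoint.infty} :=
        ⟨hp, h, by rw [← hpv]; exact OnePoint.coe_ne_infty v⟩
      rw [hfin] at hpD
      obtain ⟨x, hxK, hx⟩ := hF1 p hpD.1 ⟨v, hv, hpv⟩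
      exact Or.inl ⟨x, hKA hxK, hx⟩
  -- two open sets meeting R
  have hO₁o : IsOpen (B ×ˢ cVo) := hBo.prod hcVoo
  have hO₂o : IsOpen (cA ×ˢ cVo) := hcAo.prod hcVoo
  have hRO₁ : ((R : Set (OnePoint X × OnePoint X)) ∩ B ×ˢ cVo).Nonempty :=
    ⟨((∞ : OnePoint X), (y : OnePoint X)), hyR, hinftyB, ⟨y, hyV, rfl⟩⟩
  have hRO₂ : ((R : Set (OnePoint X × OnePoint X)) ∩ cA ×ˢ cVo).Nonempty :=
    ⟨((k : OnePoint X), (y : OnePoint X)), hkR, ⟨k, hKA hkK, rfl⟩, ⟨y, hyV, rfl⟩⟩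
  obtain ⟨Γ, ⟨g, rfl⟩, hgW, hgO₁, hgO₂⟩ :=
    vietoris_approx2 hR hWo hRW hO₁o hRO₁ hO₂o hRO₂
  set e : Equiv.Perm X := (g : Equiv.Perm X) with he
  -- Q = e ⁻¹' V is connected
  have hcontsymm : Continuous ⇑e.symm := by
    have h1 := hhomeo g⁻¹
    have h2 : ((g⁻¹ : G) : Equiv.Perm X) = e⁻¹ := rfl
    rw [h2] at h1
    exact h1
  set Q : Set X := ⇑e ⁻¹' V with hQ
  have hQeq : Q = ⇑e.symm '' V := by
    rw [Equiv.image_eq_preimage_symm]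
    simp [hQ]
  have hQconn : IsPreconnected Q := by
    rw [hQeq]
    exact hVconn.isPreconnected.image _ hcontsymm.continuousOn
  -- Q ⊆ A ∪ BX
  set BX : Set X := ((↑) : X → OnePoint X) ⁻¹' B with hBX
  have hBXo : IsOpen BX := hBo.preimage OnePoint.continuous_coe
  have hABX : A ∩ BX = ∅ := by
    ext x
    simp only [mem_inter_iff, mem_empty_iff_false, iff_false, not_and]
    intro hxA hxB
    exact hxB (mem_image_of_mem _ (hAL hxA))
  have hQsub : Q ⊆ A ∪ BX := by
    intro x hx
    have hmem : ((x : OnePoint X), ((e x : X) : OnePoint X)) ∈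
        (ι g : Set (OnePoint X × OnePoint X)) := by
      rw [hι g]; exact Or.inr ⟨x, rfl, rfl⟩
    have hW' := hgW hmem
    rw [hWdef] at hW'
    simp only [mem_compl_iff, prodMk_mem_set_prod_eq, not_and] at hW'
    have : (x : OnePoint X) ∈ cA ∪ B := by
      by_contra hcon
      exact hW' (fun hmm => hcon hmm) ⟨e x, subset_closure hx, rfl⟩
    rcases this with h | h
    · obtain ⟨x', hx', hxx⟩ := h
      left; rwa [OnePoint.coe_injective hxx] at hx'
    · right; exact h
  -- points of Q in BX and in A
  obtain ⟨p₁, hp₁g, hp₁B, hp₁V⟩ := hgO₁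
  obtain ⟨x₁, hx₁Q, hx₁B⟩ : ∃ x₁, x₁ ∈ Q ∧ x₁ ∈ BX := by
    rw [hι g] at hp₁g
    rcases hp₁g with ⟨_, h2⟩ | ⟨x, hx1, hx2⟩
    · exact absurd (h2 ▸ hp₁V) (fun hh => OnePoint.infty_notMem_image_coe (hh : _ ∈ cVo))
    · refine ⟨x, ?_, ?_⟩
      · have hmm : ((((g : Equiv.Perm X)) x : X) : OnePoint X) ∈ cVo := hx2 ▸ hp₁V
        obtain ⟨v, hv, hvv⟩ := hmm
        have hev : v = (g : Equiv.Perm X) x := OnePoint.coe_injective hvv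
        show (g : Equiv.Perm X) x ∈ V
        rw [← hev]; exact hv
      · rw [hBX, mem_preimage, ← hx1]; exact hp₁B
  obtain ⟨p₂, hp₂g, hp₂A, hp₂V⟩ := hgO₂
  obtain ⟨x₂, hx₂Q, hx₂A⟩ : ∃ x₂, x₂ ∈ Q ∧ x₂ ∈ A := by
    rw [hι g] at hp₂g
    rcases hp₂g with ⟨_, h2⟩ | ⟨x, hx1, hx2⟩
    · exact absurd (h2 ▸ hp₂V) (fun hh => OnePoint.infty_notMem_image_coe (hh : _ ∈ cVo))
    · refine ⟨x, ?_, ?_⟩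
      · have hmm : ((((g : Equiv.Perm X)) x : X) : OnePoint X) ∈ cVo := hx2 ▸ hp₂V
        obtain ⟨v, hv, hvv⟩ := hmm
        have hev : v = (g : Equiv.Perm X) x := OnePoint.coe_injective hvv
        show (g : Equiv.Perm X) x ∈ V
        rw [← hev]; exact hv
      · have hmm : ((x : X) : OnePoint X) ∈ cA := hx1 ▸ hp₂A
        obtain ⟨a, ha, haa⟩ := hmm
        rwa [OnePoint.coe_injective haa] at ha
  obtain ⟨z, _, hzA, hzB⟩ := hQconn A BX hAo hBXo hQsub ⟨x₂, hx₂Q, hx₂A⟩ ⟨x₁, hx₁Q, hx₁B⟩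
  have : z ∈ A ∩ BX := ⟨hzA, hzB⟩
  rw [hABX] at this
  exact this

lemma hard_col {R S : HClosed (OnePoint X × OnePoint X)}
    (hR : R ∈ @closure _ (vietorisTop (OnePoint X × OnePoint X)) (Set.range ι))
    (hS : S ∈ @closure _ (vietorisTop (OnePoint X × OnePoint X)) (Set.range ι))
    (hfin : (R : Set (OnePoint X × OnePoint X)) ∩
        {p | p.1 ≠ OnePoint.infty ∧ p.2 ≠ OnePoint.infty} =
      (S : Set (OnePoint X × OnePoint X)) ∩
        {p | p.1 ≠ OnePoint.infty ∧ p.2 ≠ OnePoint.infty})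
    (y : X) (hyR : ((y : OnePoint X), (∞ : OnePoint X)) ∈ (R : Set (OnePoint X × OnePoint X))) :
    ((y : OnePoint X), (∞ : OnePoint X)) ∈ (S : Set (OnePoint X × OnePoint X)) := by
  by_contra hnot
  obtain ⟨V₀, U, hV₀, hU, hV₀mem, hUmem, hUV⟩ :=
    isOpen_prod_iff.mp S.2.isOpen_compl _ _ hnot
  obtain ⟨K, ⟨hKcl, hKcomp⟩, hKU⟩ :=
    OnePoint.hasBasis_nhds_infty.mem_iff.mp (hU.mem_nhds hUmem)
  have hyV₀ : y ∈ ((↑) : X → OnePoint X) ⁻¹' V₀ := hV₀mem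
  obtain ⟨C, hCn, hCsub, hCcomp⟩ :=
    local_compact_nhds ((hV₀.preimage OnePoint.continuous_coe).mem_nhds hyV₀)
  obtain ⟨V, ⟨hVo, hyV, hVconn⟩, hVC⟩ :=
    (LocallyConnectedSpace.open_connected_basis y).mem_iff.mp hCn
  have hclVC : closure V ⊆ C := closure_minimal hVC hCcomp.isClosed
  have hclVcomp : IsCompact (closure V) := hCcomp.of_isClosed_subset isClosed_closure hclVC
  obtain ⟨K', hK'comp, hKint⟩ := exists_compact_superset hKcomp
  set A : Set X := interior K' with hA
  have hAo : IsOpen A := isOpen_interior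
  have hKA : K ⊆ A := hKint
  set L : Set X := closure A with hL
  have hLcomp : IsCompact L :=
    hK'comp.of_isClosed_subset isClosed_closure (closure_minimal interior_subset hK'comp.isClosed)
  have hAL : A ⊆ L := subset_closure
  set cA : Set (OnePoint X) := ((↑) : X → OnePoint X) '' A with hcA
  have hcAo : IsOpen cA := OnePoint.isOpen_image_coe.2 hAo
  set B : Set (OnePoint X) := (((↑) : X → OnePoint X) '' L)ᶜ with hB
  have hBo : IsOpen B := OnePoint.isOpen_compl_image_coe.2 ⟨hLcomp.isClosed, hLcomp⟩
  have hinftyB : (∞ : OnePoint X) ∈ B := OnePoint.infty_notMem_image_coe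
  set cV : Set (OnePoint X) := ((↑) : X → OnePoint X) '' closure V with hcV
  have hcVcl : IsClosed cV := OnePoint.isClosed_image_coe.2 ⟨isClosed_closure, hclVcomp⟩
  set cVo : Set (OnePoint X) := ((↑) : X → OnePoint X) '' V with hcVo
  have hcVoo : IsOpen cVo := OnePoint.isOpen_image_coe.2 hVo
  have hVsub : cVo ⊆ cV := image_mono subset_closure
  -- F1 : points of S whose first coordinate lies in cV have second coordinate in coe '' K
  have hF1 : ∀ p ∈ (S : Set (OnePoint X × OnePoint X)), p.1 ∈ cV →
      p.2 ∈ ((↑) : X → OnePoint X) '' K := by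
    intro p hp hp1
    by_contra hp2
    obtain ⟨v, hv, hpv⟩ := hp1
    have h1 : p.1 ∈ V₀ := by rw [← hpv]; exact hCsub (hclVC hv)
    have h2 : p.2 ∈ U := by
      rcases em (p.2 = ∞) with h | h
      · rw [h]; exact hKU (Or.inr rfl)
      · obtain ⟨x, hx⟩ := OnePoint.ne_infty_iff_exists.mp h
        have hxK : x ∉ K := fun hxK => hp2 ⟨x, hxK, hx⟩
        rw [← hx]; exact hKU (Or.inl ⟨x, hxK, rfl⟩)
    exact hUV ⟨h1, h2⟩ hp
  obtain ⟨b, hbS⟩ := mem_col_aux hhomeo hι hS (y : OnePoint X)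
  obtain ⟨k, hkK, rfl⟩ := hF1 ((y : OnePoint X), b) hbS ⟨y, subset_closure hyV, rfl⟩
  have hkR : ((y : OnePoint X), (k : OnePoint X)) ∈ (R : Set (OnePoint X × OnePoint X)) := by
    have hmem : ((y : OnePoint X), (k : OnePoint X)) ∈ (S : Set (OnePoint X × OnePoint X)) ∩
        {p | p.1 ≠ OnePoint.infty ∧ p.2 ≠ OnePoint.infty} :=
      ⟨hbS, OnePoint.coe_ne_infty y, OnePoint.coe_ne_infty k⟩
    rw [← hfin] at hmem
    exact hmem.1
  set W : Set (OnePoint X × OnePoint X) := (cV ×ˢ (cA ∪ B)ᶜ)ᶜ with hWdef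
  have hWo : IsOpen W := (hcVcl.prod ((hcAo.union hBo).isClosed_compl)).isOpen_compl
  have hRW : (R : Set (OnePoint X × OnePoint X)) ⊆ W := by
    intro p hp hpmem
    obtain ⟨hp1, hp2⟩ := hpmem
    apply hp2
    rcases em (p.2 = ∞) with h | h
    · right; rw [h]; exact hinftyB
    · obtain ⟨v, hv, hpv⟩ := hp1
      have hpD : p ∈ (R : Set (OnePoint X × OnePoint X)) ∩
          {q | q.1 ≠ OnePoint.infty ∧ q.2 ≠ OnePoint.infty} :=
        ⟨hp, by rw [← hpv]; exact OnePoint.coe_ne_infty v, h⟩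
      rw [hfin] at hpD
      obtain ⟨x, hxK, hx⟩ := hF1 p hpD.1 ⟨v, hv, hpv⟩
      exact Or.inl ⟨x, hKA hxK, hx⟩
  have hO₁o : IsOpen (cVo ×ˢ B) := hcVoo.prod hBo
  have hO₂o : IsOpen (cVo ×ˢ cA) := hcVoo.prod hcAo
  have hRO₁ : ((R : Set (OnePoint X × OnePoint X)) ∩ cVo ×ˢ B).Nonempty :=
    ⟨((y : OnePoint X), (∞ : OnePoint X)), hyR, ⟨y, hyV, rfl⟩, hinftyB⟩
  have hRO₂ : ((R : Set (OnePoint X × OnePoint X)) ∩ cVo ×ˢ cA).Nonempty :=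
    ⟨((y : OnePoint X), (k : OnePoint X)), hkR, ⟨y, hyV, rfl⟩, ⟨k, hKA hkK, rfl⟩⟩
  obtain ⟨Γ, ⟨g, rfl⟩, hgW, hgO₁, hgO₂⟩ :=
    vietoris_approx2 hR hWo hRW hO₁o hRO₁ hO₂o hRO₂
  set e : Equiv.Perm X := (g : Equiv.Perm X) with he
  set Q : Set X := ⇑e '' V with hQ
  have hQconn : IsPreconnected Q := hVconn.isPreconnected.image _ (hhomeo g).continuousOn
  set BX : Set X := ((↑) : X → OnePoint X) ⁻¹' B with hBX
  have hBXo : IsOpen BX := hBo.preimage OnePoint.continuous_coe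
  have hABX : A ∩ BX = ∅ := by
    ext x
    simp only [mem_inter_iff, mem_empty_iff_false, iff_false, not_and]
    intro hxA hxB
    exact hxB (mem_image_of_mem _ (hAL hxA))
  have hQsub : Q ⊆ A ∪ BX := by
    rintro z ⟨x, hx, rfl⟩
    have hmem : ((x : OnePoint X), ((e x : X) : OnePoint X)) ∈
        (ι g : Set (OnePoint X × OnePoint X)) := by
      rw [hι g]; exact Or.inr ⟨x, rfl, rfl⟩
    have hW' := hgW hmem
    rw [hWdef] at hW'
    simp only [mem_compl_iff, prodMk_mem_set_prod_eq, not_and] at hW'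
    have : ((e x : X) : OnePoint X) ∈ cA ∪ B := by
      by_contra hcon
      exact hW' ⟨x, subset_closure hx, rfl⟩ hcon
    rcases this with h | h
    · obtain ⟨x', hx', hxx⟩ := h
      left; rwa [OnePoint.coe_injective hxx] at hx'
    · right; exact h
  obtain ⟨p₁, hp₁g, hp₁V, hp₁B⟩ := hgO₁
  obtain ⟨x₁, hx₁Q, hx₁B⟩ : ∃ x₁, x₁ ∈ Q ∧ x₁ ∈ BX := by
    rw [hι g] at hp₁g
    rcases hp₁g with ⟨h1, _⟩ | ⟨x, hx1, hx2⟩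
    · exact absurd (h1 ▸ hp₁V) (fun hh => OnePoint.infty_notMem_image_coe (hh : _ ∈ cVo))
    · refine ⟨(g : Equiv.Perm X) x, ?_, ?_⟩
      · have hmm : ((x : X) : OnePoint X) ∈ cVo := hx1 ▸ hp₁V
        obtain ⟨v, hv, hvv⟩ := hmm
        exact ⟨x, by rwa [OnePoint.coe_injective hvv] at hv, rfl⟩
      · rw [hBX, mem_preimage, ← hx2]; exact hp₁B
  obtain ⟨p₂, hp₂g, hp₂V, hp₂A⟩ := hgO₂
  obtain ⟨x₂, hx₂Q, hx₂A⟩ : ∃ x₂, x₂ ∈ Q ∧ x₂ ∈ A := by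
    rw [hι g] at hp₂g
    rcases hp₂g with ⟨h1, _⟩ | ⟨x, hx1, hx2⟩
    · exact absurd (h1 ▸ hp₂V) (fun hh => OnePoint.infty_notMem_image_coe (hh : _ ∈ cVo))
    · refine ⟨(g : Equiv.Perm X) x, ?_, ?_⟩
      · have hmm : ((x : X) : OnePoint X) ∈ cVo := hx1 ▸ hp₂V
        obtain ⟨v, hv, hvv⟩ := hmm
        exact ⟨x, by rwa [OnePoint.coe_injective hvv] at hv, rfl⟩
      · have hmm : ((((g : Equiv.Perm X) x : X)) : OnePoint X) ∈ cA := hx2 ▸ hp₂A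
        obtain ⟨a, ha, haa⟩ := hmm
        rwa [OnePoint.coe_injective haa] at ha
  obtain ⟨z, _, hzA, hzB⟩ := hQconn A BX hAo hBXo hQsub ⟨x₂, hx₂Q, hx₂A⟩ ⟨x₁, hx₁Q, hx₁B⟩
  have : z ∈ A ∩ BX := ⟨hzA, hzB⟩
  rw [hABX] at this
  exact this

end Main

/-- For a group `G` of homeomorphisms of a locally compact, locally connected Hausdorff space
`X`, two members of the closure (in the Vietoris hyperspace of `αX × αX`) of the graphs of the
extensions `ĝ` to the one-point compactification that agree on `X × X` are equal. -/
theorem stmt_11 {X : Type*} [TopologicalSpace X] [T2Space X] [LocallyCompactSpace X]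
    [LocallyConnectedSpace X]
    (G : Subgroup (Equiv.Perm X))
    (hhomeo : ∀ g : G, Continuous ⇑(g : Equiv.Perm X))
    (ι : G → HClosed (OnePoint X × OnePoint X))
    (hι : ∀ g : G, (ι g : Set (OnePoint X × OnePoint X)) =
      {p : OnePoint X × OnePoint X |
        (p.1 = OnePoint.infty ∧ p.2 = OnePoint.infty) ∨
        ∃ x : X, p.1 = (x : OnePoint X) ∧ p.2 = (((g : Equiv.Perm X) x : X) : OnePoint X)})
    (R S : HClosed (OnePoint X × OnePoint X))
    (hR : R ∈ @closure _ (vietorisTop (OnePoint X × OnePoint X)) (Set.range ι))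
    (hS : S ∈ @closure _ (vietorisTop (OnePoint X × OnePoint X)) (Set.range ι))
    (hRS : (R : Set (OnePoint X × OnePoint X)) ∩
        {p | p.1 ≠ OnePoint.infty ∧ p.2 ≠ OnePoint.infty} =
      (S : Set (OnePoint X × OnePoint X)) ∩
        {p | p.1 ≠ OnePoint.infty ∧ p.2 ≠ OnePoint.infty}) :
    R = S := by
  apply Subtype.ext
  apply Set.Subset.antisymm
  · intro p hp
    rcases em (p.1 = OnePoint.infty) with h1 | h1
    · rcases em (p.2 = OnePoint.infty) with h2 | h2
      · have hp' : p = (OnePoint.infty, OnePoint.infty) := Prod.ext_iff.mpr ⟨h1, h2⟩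
        rw [hp'] at hp ⊢
        exact mem_infty_pair hhomeo hι hS
      · obtain ⟨y, hy⟩ := OnePoint.ne_infty_iff_exists.mp h2
        have hp' : p = (OnePoint.infty, (y : OnePoint X)) := by rw [hy, ← h1]
        rw [hp'] at hp ⊢
        exact hard_row hhomeo hι hR hS hRS y hp
    · rcases em (p.2 = OnePoint.infty) with h2 | h2
      · obtain ⟨y, hy⟩ := OnePoint.ne_infty_iff_exists.mp h1
        have hp' : p = ((y : OnePoint X), OnePoint.infty) := by rw [hy, ← h2]
        rw [hp'] at hp ⊢
        exact hard_col hhomeo hι hR hS hRS y hp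
      · have hmem : p ∈ (R : Set (OnePoint X × OnePoint X)) ∩
            {q | q.1 ≠ OnePoint.infty ∧ q.2 ≠ OnePoint.infty} := ⟨hp, h1, h2⟩
        rw [hRS] at hmem
        exact hmem.1
  · intro p hp
    rcases em (p.1 = OnePoint.infty) with h1 | h1
    · rcases em (p.2 = OnePoint.infty) with h2 | h2
      · have hp' : p = (OnePoint.infty, OnePoint.infty) := Prod.ext_iff.mpr ⟨h1, h2⟩
        rw [hp'] at hp ⊢
        exact mem_infty_pair hhomeo hι hR
      · obtain ⟨y, hy⟩ := OnePoint.ne_infty_iff_exists.mp h2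
        have hp' : p = (OnePoint.infty, (y : OnePoint X)) := by rw [hy, ← h1]
        rw [hp'] at hp ⊢
        exact hard_row hhomeo hι hS hR hRS.symm y hp
    · rcases em (p.2 = OnePoint.infty) with h2 | h2
      · obtain ⟨y, hy⟩ := OnePoint.ne_infty_iff_exists.mp h1
        have hp' : p = ((y : OnePoint X), OnePoint.infty) := by rw [hy, ← h2]
        rw [hp'] at hp ⊢
        exact hard_col hhomeo hι hS hR hRS.symm y hp
      · have hmem : p ∈ (S : Set (OnePoint X × OnePoint X)) ∩
            {q | q.1 ≠ OnePoint.infty ∧ q.2 ≠ OnePoint.infty} := ⟨hp, h1, h2⟩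
        rw [← hRS] at hmem
        exact hmem.1
end

section
/- Let X be a compact Hausdorff space and G a group of homeomorphisms of X. Then every R in the closure of {Γ(g) : g ∈ G} in the hyperspace of closed subsets of X × X with the Vietoris topology satisfies pr₁(R) = X and pr₂(R) = X, where pr₁ and pr₂ are the projections of X × X onto the first and second coordinate. -/
/-- For a compact Hausdorff space `X` and a group `G` of homeomorphisms of `X`, every member of
the closure of the set of graphs in the Vietoris hyperspace of `X × X` has full projections onto
both coordinates. -/
theorem stmt_12 {X : Type*} [TopologicalSpace X] [CompactSpace X] [T2Space X]
    (G : Subgroup (Equiv.Perm X))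
    (hhomeo : ∀ g : G, Continuous ⇑(g : Equiv.Perm X))
    (ι : G → HClosed (X × X))
    (hι : ∀ g : G, (ι g : Set (X × X)) = {p : X × X | p.2 = (g : Equiv.Perm X) p.1})
    (R : HClosed (X × X))
    (hR : R ∈ @closure _ (vietorisTop (X × X)) (Set.range ι)) :
    Prod.fst '' (R : Set (X × X)) = Set.univ ∧
    Prod.snd '' (R : Set (X × X)) = Set.univ := by
  letI : TopologicalSpace (HClosed (X × X)) := vietorisTop (X × X)
  rw [mem_closure_iff] at hR
  have key : ∀ (W : Set (X × X)), IsOpen W → (R : Set (X × X)) ⊆ W →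
      ∃ g : G, (ι g : Set (X × X)) ⊆ W := by
    intro W hW hRW
    have hU : IsOpen {A : HClosed (X × X) | (A : Set (X × X)) ⊆ W} := by
      exact TopologicalSpace.GenerateOpen.basic _ (Or.inr ⟨W, hW, rfl⟩)
    obtain ⟨A, hA1, g, rfl⟩ := hR _ hU hRW
    exact ⟨g, hA1⟩
  constructor
  · apply Set.eq_univ_of_forall
    intro x
    by_contra hx
    have hRW : (R : Set (X × X)) ⊆ {p : X × X | p.1 ≠ x} := by
      intro p hp h
      exact hx ⟨p, hp, h⟩
    obtain ⟨g, hg⟩ := key _ (isOpen_ne.preimage continuous_fst) hRW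
    have : (x, (g : Equiv.Perm X) x) ∈ (ι g : Set (X × X)) := by
      rw [hι g]; rfl
    exact hg this rfl
  · apply Set.eq_univ_of_forall
    intro x
    by_contra hx
    have hRW : (R : Set (X × X)) ⊆ {p : X × X | p.2 ≠ x} := by
      intro p hp h
      exact hx ⟨p, hp, h⟩
    obtain ⟨g, hg⟩ := key _ (isOpen_ne.preimage continuous_snd) hRW
    have : (((g : Equiv.Perm X).symm x), x) ∈ (ι g : Set (X × X)) := by
      rw [hι g]; exact (Equiv.apply_symm_apply _ x).symm
    exact hg this rfl
end

section
/- Let X be an infinite set and G a group of permutations of X acting ultratransitively. Identify subsets of X × X with points of the product space {0,1}^{X×X} carrying the product topology. Then the closure of {Γ(g) : g ∈ G} in this space is exactly the set I_X of all partial injections of X, i.e., the relations R ⊆ X × X such that (x, y₁), (x, y₂) ∈ R imply y₁ = y₂ and (x₁, y), (x₂, y) ∈ R imply x₁ = x₂ (including R = ∅). -/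
/-- The product topology on `Set Z`, each factor `Prop` carrying the discrete topology
(this is the topology of the Cantor cube `{0,1}^Z`). -/
def setTop (Z : Type*) : TopologicalSpace (Set Z) :=
  TopologicalSpace.induced (fun (A : Set Z) (z : Z) => z ∈ A)
    (@Pi.topologicalSpace Z (fun _ => Prop) fun _ => ⊥)

/-- A group of permutations of `X` acts ultratransitively if any injective finite tuple can be
mapped onto any other injective finite tuple of the same length by a member of the group. -/
def Ultratransitive {X : Type*} (G : Subgroup (Equiv.Perm X)) : Prop :=
  ∀ (n : ℕ) (x y : Fin n → X), Function.Injective x → Function.Injective y →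
    ∃ g : G, ∀ i : Fin n, (g : Equiv.Perm X) (x i) = y i

/-- A partial injection of `X`: a relation which is the graph of an injection defined on a
subset of `X`. -/
def PartialInjection {X : Type*} (R : Set (X × X)) : Prop :=
  (∀ x y₁ y₂, (x, y₁) ∈ R → (x, y₂) ∈ R → y₁ = y₂) ∧
  (∀ x₁ x₂ y, (x₁, y) ∈ R → (x₂, y) ∈ R → x₁ = x₂)

/-- Key combinatorial lemma: any finite piece of a partial injection can be matched exactly
(including non-membership) by the graph of a group element. -/
lemma stmt13_key {X : Type*} [Infinite X] (G : Subgroup (Equiv.Perm X)) (hG : Ultratransitive G)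
    (R : Set (X × X)) (hR : PartialInjection R) (I : Finset (X × X)) :
    ∃ g : G, ∀ p ∈ I, ((p.2 = (g : Equiv.Perm X) p.1) ↔ p ∈ R) := by
  classical
  set D : Finset X := I.image Prod.fst with hD
  set T : Finset X := I.image Prod.snd with hT
  haveI : Infinite ((↑T : Set X)ᶜ : Set X) := (T.finite_toSet.infinite_compl).to_subtype
  let ψ : (↥D) ↪ ((↑T : Set X)ᶜ : Set X) :=
    D.equivFin.toEmbedding.trans (Fin.valEmbedding.trans (Infinite.natEmbedding _))
  let f : ↥D → X := fun a =>
    if h : ∃ b, ((a : X), b) ∈ I ∧ ((a : X), b) ∈ R then h.choose else (ψ a : X)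
  have hfR : ∀ (a : ↥D) (h : ∃ b, ((a : X), b) ∈ I ∧ ((a : X), b) ∈ R),
      ((a : X), f a) ∈ I ∧ ((a : X), f a) ∈ R := by
    intro a h
    simpa [f, dif_pos h] using h.choose_spec
  have hfF : ∀ (a : ↥D), (¬ ∃ b, ((a : X), b) ∈ I ∧ ((a : X), b) ∈ R) → f a ∉ T := by
    intro a h
    simp only [f, dif_neg h]
    exact (ψ a).2
  have hmemT : ∀ p ∈ I, p.2 ∈ T := fun p hp => Finset.mem_image_of_mem _ hp
  have hfinj : Function.Injective f := by
    intro a₁ a₂ hf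
    by_cases h₁ : ∃ b, ((a₁ : X), b) ∈ I ∧ ((a₁ : X), b) ∈ R
    · by_cases h₂ : ∃ b, ((a₂ : X), b) ∈ I ∧ ((a₂ : X), b) ∈ R
      · have p₁ := hfR a₁ h₁
        have p₂ := hfR a₂ h₂
        rw [hf] at p₁
        exact Subtype.ext (hR.2 _ _ _ p₁.2 p₂.2)
      · exact absurd (hmemT _ (hfR a₁ h₁).1) (hf ▸ hfF a₂ h₂)
    · by_cases h₂ : ∃ b, ((a₂ : X), b) ∈ I ∧ ((a₂ : X), b) ∈ R
      · exact absurd (hmemT _ (hfR a₂ h₂).1) (hf ▸ hfF a₁ h₁)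
      · have : ψ a₁ = ψ a₂ := by
          apply Subtype.ext
          simpa [f, dif_neg h₁, dif_neg h₂] using hf
        exact ψ.injective this
  let e := D.equivFin.symm
  obtain ⟨g, hg⟩ := hG D.card (fun i => (e i : X)) (fun i => f (e i))
    (fun i j hij => e.injective (Subtype.ext hij))
    (fun i j hij => e.injective (hfinj hij))
  have hgf : ∀ a : ↥D, (g : Equiv.Perm X) (a : X) = f a := by
    intro a
    have := hg (e.symm a)
    simpa using this
  refine ⟨g, fun p hp => ?_⟩
  have hpD : p.1 ∈ D := Finset.mem_image_of_mem _ hp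
  have hga : (g : Equiv.Perm X) p.1 = f ⟨p.1, hpD⟩ := hgf ⟨p.1, hpD⟩
  rw [hga]
  by_cases h : ∃ b, (p.1, b) ∈ I ∧ (p.1, b) ∈ R
  · constructor
    · intro hpe
      have := (hfR ⟨p.1, hpD⟩ h).2
      rw [← hpe] at this
      exact this
    · intro hpR
      exact hR.1 p.1 p.2 _ hpR (hfR ⟨p.1, hpD⟩ h).2
  · constructor
    · intro hpe
      exact absurd (hmemT p hp) (hpe ▸ hfF ⟨p.1, hpD⟩ h)
    · intro hpR
      exact absurd ⟨p.2, hp, hpR⟩ h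

section TopFacts

variable {Z : Type*}
local instance stmt13PropTop : TopologicalSpace Prop := ⊥
local instance stmt13PropDiscrete : DiscreteTopology Prop := ⟨rfl⟩

lemma stmt13_setTop_eq : setTop Z = (Pi.topologicalSpace : TopologicalSpace (Z → Prop)) :=
  @induced_id _ (@Pi.topologicalSpace Z (fun _ => Prop) (fun _ => ⊥))

lemma stmt13_cyl_open (p : Z) : @IsOpen _ (setTop Z) {R : Set Z | p ∈ R} := by
  rw [stmt13_setTop_eq]
  have : Continuous (fun R : Z → Prop => R p) := continuous_apply p
  exact this.isOpen_preimage {q : Prop | q} (isOpen_discrete _)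

lemma stmt13_pi_closed {X : Type*} :
    @IsClosed _ (setTop (X × X)) {R : Set (X × X) | PartialInjection R} := by
  letI : TopologicalSpace (Set (X × X)) := setTop (X × X)
  have h1 : ∀ (x y₁ y₂ : X), IsClosed {R : Set (X × X) | (x, y₁) ∈ R → (x, y₂) ∈ R → y₁ = y₂} := by
    intro x y₁ y₂
    by_cases h : y₁ = y₂
    · have : {R : Set (X × X) | (x, y₁) ∈ R → (x, y₂) ∈ R → y₁ = y₂} = Set.univ := by
        ext R; simp [h]
      rw [this]; exact isClosed_univ
    · have : {R : Set (X × X) | (x, y₁) ∈ R → (x, y₂) ∈ R → y₁ = y₂}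
          = ({R : Set (X × X) | (x, y₁) ∈ R} ∩ {R | (x, y₂) ∈ R})ᶜ := by
        ext R; simp only [Set.mem_setOf_eq, Set.mem_compl_iff, Set.mem_inter_iff]; tauto
      rw [this]
      exact (IsOpen.inter (stmt13_cyl_open _) (stmt13_cyl_open _)).isClosed_compl
  have h2 : ∀ (x₁ x₂ y : X), IsClosed {R : Set (X × X) | (x₁, y) ∈ R → (x₂, y) ∈ R → x₁ = x₂} := by
    intro x₁ x₂ y
    by_cases h : x₁ = x₂
    · have : {R : Set (X × X) | (x₁, y) ∈ R → (x₂, y) ∈ R → x₁ = x₂} = Set.univ := by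
        ext R; simp [h]
      rw [this]; exact isClosed_univ
    · have : {R : Set (X × X) | (x₁, y) ∈ R → (x₂, y) ∈ R → x₁ = x₂}
          = ({R : Set (X × X) | (x₁, y) ∈ R} ∩ {R | (x₂, y) ∈ R})ᶜ := by
        ext R; simp only [Set.mem_setOf_eq, Set.mem_compl_iff, Set.mem_inter_iff]; tauto
      rw [this]
      exact (IsOpen.inter (stmt13_cyl_open _) (stmt13_cyl_open _)).isClosed_compl
  have : {R : Set (X × X) | PartialInjection R} =
      (⋂ x, ⋂ y₁, ⋂ y₂, {R : Set (X × X) | (x, y₁) ∈ R → (x, y₂) ∈ R → y₁ = y₂}) ∩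
      (⋂ x₁, ⋂ x₂, ⋂ y, {R : Set (X × X) | (x₁, y) ∈ R → (x₂, y) ∈ R → x₁ = x₂}) := by
    ext R
    simp only [Set.mem_inter_iff, Set.mem_iInter, Set.mem_setOf_eq, PartialInjection]
  rw [this]
  exact IsClosed.inter
    (isClosed_iInter fun x => isClosed_iInter fun y₁ => isClosed_iInter fun y₂ => h1 x y₁ y₂)
    (isClosed_iInter fun x₁ => isClosed_iInter fun x₂ => isClosed_iInter fun y => h2 x₁ x₂ y)

end TopFacts

/-- For an ultratransitive group `G` of permutations of an infinite set `X`, the closure of the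
set of graphs of elements of `G` in `{0,1}^{X×X}` is exactly the set of all partial injections
of `X`. -/
theorem stmt_13 {X : Type*} [Infinite X] (G : Subgroup (Equiv.Perm X))
    (hG : Ultratransitive G) :
    @closure _ (setTop (X × X))
        {R : Set (X × X) | ∃ g : G, R = {p : X × X | p.2 = (g : Equiv.Perm X) p.1}} =
      {R : Set (X × X) | PartialInjection R} := by
  letI tP : TopologicalSpace Prop := ⊥
  haveI : DiscreteTopology Prop := ⟨rfl⟩
  letI tS : TopologicalSpace (Set (X × X)) := setTop (X × X)
  apply subset_antisymm
  · apply closure_minimal _ stmt13_pi_closed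
    rintro R ⟨g, rfl⟩
    constructor
    · intro x y₁ y₂ h₁ h₂
      simp only [Set.mem_setOf_eq] at h₁ h₂
      rw [h₁, h₂]
    · intro x₁ x₂ y h₁ h₂
      simp only [Set.mem_setOf_eq] at h₁ h₂
      exact (g : Equiv.Perm X).injective (h₁ ▸ h₂)
  · intro R hR
    rw [mem_closure_iff]
    intro o ho hRo
    rw [stmt13_setTop_eq] at ho
    obtain ⟨I, u, hu, hsub⟩ := (isOpen_pi_iff.mp ho) (fun p => p ∈ R) hRo
    obtain ⟨g, hg⟩ := stmt13_key G hG R hR I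
    refine ⟨{p : X × X | p.2 = (g : Equiv.Perm X) p.1}, ?_, g, rfl⟩
    apply hsub
    intro p hp
    have heq : (p.2 = (g : Equiv.Perm X) p.1) = (p ∈ R) := propext (hg p hp)
    show (p ∈ {p : X × X | p.2 = (g : Equiv.Perm X) p.1}) ∈ u p
    rw [show (p ∈ {p : X × X | p.2 = (g : Equiv.Perm X) p.1}) = (p.2 = (g : Equiv.Perm X) p.1)
      from rfl, heq]
    exact (hu p hp).2
end

section
/- Let X be an infinite set and G a group of permutations of X acting ultratransitively. Let αX = X ∪ {∞} be the one-point compactification of the discrete space X, and for g ∈ G let ĝ : αX → αX be the extension of g with ĝ(∞) = ∞. Let E be the closure of {ĝ : g ∈ G} in the product space (αX)^{αX}. Then the map Ψ : E → {0,1}^{X×X}, Ψ(f) = {(x, y) ∈ X × X : f(x) = y}, is a homeomorphism of E onto the closure of {Γ(g) : g ∈ G} in {0,1}^{X×X} (with the product topology), and Ψ(ĝ) = Γ(g) for all g ∈ G. -/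
lemma setTop_t2 (Z : Type*) : @T2Space (Set Z) (setTop Z) := by
  letI : TopologicalSpace Prop := ⊥
  haveI : DiscreteTopology Prop := discreteTopology_bot Prop
  letI : TopologicalSpace (Set Z) := setTop Z
  have hemb : Topology.IsEmbedding (fun (A : Set Z) (z : Z) => z ∈ A) := by
    refine ⟨⟨rfl⟩, fun A B h => ?_⟩
    ext z
    exact iff_of_eq (congrFun h z)
  exact hemb.t2Space

lemma clopen_singleton {X : Type*} [TopologicalSpace X] [DiscreteTopology X] (y : X) :
    IsClopen ({(y : OnePoint X)} : Set (OnePoint X)) := by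
  have h : ({(y : OnePoint X)} : Set (OnePoint X)) = (↑) '' {y} := by simp
  rw [h]
  exact ⟨OnePoint.isClosed_image_coe.2 ⟨isClosed_discrete _, isCompact_singleton⟩,
    OnePoint.isOpen_image_coe.2 (isOpen_discrete _)⟩

lemma psi_cont {X : Type*} [TopologicalSpace X] [DiscreteTopology X] :
    @Continuous (OnePoint X → OnePoint X) (Set (X × X)) _ (setTop (X × X))
      (fun f => {p : X × X | f (p.1 : OnePoint X) = (p.2 : OnePoint X)}) := by
  rw [setTop, continuous_induced_rng]
  letI : TopologicalSpace Prop := ⊥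
  haveI : DiscreteTopology Prop := discreteTopology_bot Prop
  apply continuous_pi
  intro p
  have hco : IsClopen {f : OnePoint X → OnePoint X | f ↑p.1 = ↑p.2} :=
    (clopen_singleton p.2).preimage (continuous_apply (p.1 : OnePoint X))
  rw [continuous_discrete_rng]
  intro b
  by_cases hb : b
  · convert hco.isOpen using 1
    ext f
    simp [eq_iff_iff, hb]
  · convert hco.compl.isOpen using 1
    ext f
    simp [eq_iff_iff, hb]

/-- For an ultratransitive permutation group `G` of an infinite discrete space `X`, the map
`Ψ(f) = {(x,y) | f(x) = y}` is a homeomorphism of the Ellis semigroup `E` (the closure of the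
extensions `ĝ` in `(αX)^{αX}`) onto the closure `C` of the graphs in `{0,1}^{X×X}`, sending
`ĝ` to `Γ(g)`. -/
theorem stmt_15 {X : Type*} [TopologicalSpace X] [DiscreteTopology X] [Infinite X]
    (G : Subgroup (Equiv.Perm X)) (hG : Ultratransitive G)
    (extg : G → OnePoint X → OnePoint X)
    (hext_inf : ∀ g : G, extg g OnePoint.infty = OnePoint.infty)
    (hext_coe : ∀ (g : G) (x : X),
      extg g (x : OnePoint X) = (((g : Equiv.Perm X) x : X) : OnePoint X))
    (E : Set (OnePoint X → OnePoint X)) (hE : E = closure (Set.range extg))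
    (C : Set (Set (X × X)))
    (hC : C = @closure _ (setTop (X × X))
      {R : Set (X × X) | ∃ g : G, R = {p : X × X | p.2 = (g : Equiv.Perm X) p.1}})
    (Psi : (OnePoint X → OnePoint X) → Set (X × X))
    (hPsi : ∀ f : OnePoint X → OnePoint X,
      Psi f = {p : X × X | f (p.1 : OnePoint X) = (p.2 : OnePoint X)}) :
    Psi '' E = C ∧
    (∃ Φ : @Homeomorph ↥E ↥C inferInstance
        (@instTopologicalSpaceSubtype _ _ (setTop (X × X))),
      ∀ f : ↥E, ((Φ f : ↥C) : Set (X × X)) = Psi (f : OnePoint X → OnePoint X)) ∧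
    (∀ g : G, Psi (extg g) = {p : X × X | p.2 = (g : Equiv.Perm X) p.1}) := by
  letI tS : TopologicalSpace (Set (X × X)) := setTop (X × X)
  haveI : T2Space (Set (X × X)) := setTop_t2 _
  -- third claim
  have hgraph : ∀ g : G, Psi (extg g) = {p : X × X | p.2 = (g : Equiv.Perm X) p.1} := by
    intro g
    rw [hPsi]
    ext p
    simp only [Set.mem_setOf_eq, hext_coe]
    constructor
    · intro h; exact (OnePoint.coe_injective h).symm
    · intro h; rw [h]
  have hPsiEq : Psi = fun f => {p : X × X | f ↑p.1 = ↑p.2} := funext hPsi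
  have hcont : Continuous Psi := by rw [hPsiEq]; exact psi_cont
  have hclosedE : IsClosed E := hE ▸ isClosed_closure
  haveI : CompactSpace ↥E := isCompact_iff_compactSpace.mp hclosedE.isCompact
  -- elements of E fix ∞
  have hinf : ∀ f ∈ E, f OnePoint.infty = OnePoint.infty := by
    have hsub : E ⊆ (fun f : OnePoint X → OnePoint X => f OnePoint.infty) ⁻¹'
        {OnePoint.infty} := by
      rw [hE]
      apply closure_minimal
      · rintro _ ⟨g, rfl⟩; exact hext_inf g
      · exact OnePoint.isClosed_infty.preimage (continuous_apply _)
    exact fun f hf => hsub hf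
  have hcase : ∀ a : OnePoint X, a = OnePoint.infty ∨ ∃ y : X, a = (y : OnePoint X) :=
    fun a => Option.casesOn a (Or.inl rfl) fun y => Or.inr ⟨y, rfl⟩
  -- injectivity on E
  have hinj : Set.InjOn Psi E := by
    intro f1 h1 f2 h2 hps
    have hiff : ∀ p : X × X, (f1 ↑p.1 = ↑p.2) ↔ (f2 ↑p.1 = ↑p.2) := by
      intro p
      have := Set.ext_iff.mp hps p
      rwa [hPsi, hPsi] at this
    funext z
    rcases hcase z with rfl | ⟨x, rfl⟩
    · rw [hinf f1 h1, hinf f2 h2]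
    · rcases hcase (f1 ↑x) with h | ⟨y, h⟩
      · rcases hcase (f2 ↑x) with h2' | ⟨y, h2'⟩
        · rw [h, h2']
        · exact absurd ((h.symm.trans ((hiff (x, y)).mpr h2')).symm)
            (OnePoint.coe_ne_infty y)
      · exact h.trans ((hiff (x, y)).mp h).symm
  -- image equality
  have himgGraphs : Psi '' Set.range extg =
      {R : Set (X × X) | ∃ g : G, R = {p : X × X | p.2 = (g : Equiv.Perm X) p.1}} := by
    ext R
    constructor
    · rintro ⟨_, ⟨g, rfl⟩, rfl⟩; exact ⟨g, hgraph g⟩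
    · rintro ⟨g, rfl⟩; exact ⟨extg g, ⟨g, rfl⟩, hgraph g⟩
  have himg : Psi '' E = C := by
    apply Set.Subset.antisymm
    · rw [hE, hC, ← himgGraphs]
      exact (image_closure_subset_closure_image hcont)
    · rw [hC]
      apply closure_minimal
      · rintro R ⟨g, rfl⟩
        exact ⟨extg g, hE ▸ subset_closure ⟨g, rfl⟩, hgraph g⟩
      · exact (hclosedE.isCompact.image hcont).isClosed
  refine ⟨himg, ?_, hgraph⟩
  -- the homeomorphism
  have hmem : ∀ f : ↥E, Psi (f : OnePoint X → OnePoint X) ∈ C :=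
    fun f => himg ▸ Set.mem_image_of_mem Psi f.2
  have hbij : Function.Bijective (fun f : ↥E => (⟨Psi f, hmem f⟩ : ↥C)) := by
    constructor
    · intro f1 f2 h
      exact Subtype.ext (hinj f1.2 f2.2 (congrArg Subtype.val h))
    · rintro ⟨R, hR⟩
      obtain ⟨f, hf, rfl⟩ := himg.symm ▸ hR
      exact ⟨⟨f, hf⟩, rfl⟩
  have hcφ : Continuous (fun f : ↥E => (⟨Psi f, hmem f⟩ : ↥C)) :=
    (hcont.comp continuous_subtype_val).subtype_mk _
  refine ⟨@Continuous.homeoOfEquivCompactToT2 _ _ _ _ _ _ (Equiv.ofBijective _ hbij) hcφ,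
    fun f => rfl⟩
end

section
/- Let X be an uncountable set and I_X ⊆ {0,1}^{X×X} the set of all partial injections of X with the product topology. Then the set I_X ∖ {Γ(g) : g a bijection of X} meets every nonempty G_δ subset of I_X; equivalently, the complement in I_X of the set of graphs of total bijections of X is G_δ-dense in I_X. In particular, every nonempty G_δ subset of I_X containing the graph of a bijection also contains a partial injection that is not the graph of a bijection. -/
/-- For an uncountable set `X`, the set of partial injections that are not graphs of total
bijections of `X` is `G_δ`-dense in the space `I_X` of all partial injections of `X` (a
subspace of `{0,1}^{X×X}`): it meets every nonempty `G_δ` subset of `I_X`. -/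
theorem stmt_17 {X : Type*} [Uncountable X]
    (T : Set {R : Set (X × X) // PartialInjection R})
    (hT : @IsGδ _ (@instTopologicalSpaceSubtype _ _ (setTop (X × X))) T)
    (hne : T.Nonempty) :
    ∃ R ∈ T, ¬ ∃ g : Equiv.Perm X, (R : Set (X × X)) = {p : X × X | p.2 = g p.1} := by
  classical
  letI tpi : TopologicalSpace (X × X → Prop) :=
    @Pi.topologicalSpace (X × X) (fun _ => Prop) fun _ => ⊥
  letI : TopologicalSpace (Set (X × X)) := setTop (X × X)
  obtain ⟨R₀, hR₀⟩ := hne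
  obtain ⟨S, hSopen, hScount, hTeq⟩ := hT
  set φ : {R : Set (X × X) // PartialInjection R} → (X × X → Prop) :=
    fun R z => z ∈ R.val with hφ
  -- For each open s ∈ S, get a finite set of coordinates controlling membership
  have key : ∀ s ∈ S, ∃ I : Finset (X × X),
      ∀ R : {R : Set (X × X) // PartialInjection R},
        (∀ z ∈ I, φ R z = φ R₀ z) → R ∈ s := by
    intro s hs
    have hR₀s : R₀ ∈ s := by
      have : R₀ ∈ ⋂₀ S := hTeq ▸ hR₀
      exact this s hs
    obtain ⟨V, hV, hVs⟩ := isOpen_induced_iff.mp (hSopen s hs)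
    obtain ⟨W, hW, hWV⟩ := isOpen_induced_iff.mp hV
    have hfW : φ R₀ ∈ W := by
      have : R₀ ∈ s := hR₀s
      rw [← hVs] at this
      rw [← hWV] at this
      exact this
    obtain ⟨I, u, hu, hpi⟩ := (@isOpen_pi_iff (X × X) (fun _ => Prop) (fun _ => ⊥) W).mp hW (φ R₀) hfW
    refine ⟨I, fun R hagree => ?_⟩
    have hRW : φ R ∈ W := by
      apply hpi
      intro z hz
      rw [hagree z hz]
      exact (hu z hz).2
    rw [← hVs, Set.mem_preimage, ← hWV]
    exact hRW
  choose F hF using key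
  -- countable set of coordinates touched
  haveI := hScount.to_subtype
  set C : Set (X × X) := ⋃ s : S, (F s s.2 : Set (X × X)) with hC
  have hCcount : C.Countable := Set.countable_iUnion fun s => (F s s.2).countable_toSet
  set A : Set X := (Prod.fst '' C) ∪ (Prod.snd '' C) with hA
  have hAcount : A.Countable := (hCcount.image _).union (hCcount.image _)
  obtain ⟨x₀, hx₀⟩ : ∃ x : X, x ∉ A := by
    by_contra h
    push_neg at h
    have : (Set.univ : Set X).Countable := by
      have : A = Set.univ := Set.eq_univ_of_forall h
      rw [← this]; exact hAcount
    exact not_countable (Set.countable_univ_iff.mp this)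
  -- the modified partial injection
  set R' : Set (X × X) := R₀.val ∩ {p | p.1 ≠ x₀ ∧ p.2 ≠ x₀} with hR'
  have hR'inj : PartialInjection R' := by
    obtain ⟨h1, h2⟩ := R₀.2
    exact ⟨fun x y₁ y₂ ha hb => h1 x y₁ y₂ ha.1 hb.1,
      fun x₁ x₂ y ha hb => h2 x₁ x₂ y ha.1 hb.1⟩
  refine ⟨⟨R', hR'inj⟩, ?_, ?_⟩
  · rw [hTeq]
    intro s hs
    apply hF s hs
    intro z hz
    have hzC : z ∈ C := Set.mem_iUnion.mpr ⟨⟨s, hs⟩, hz⟩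
    have hz1 : z.1 ≠ x₀ := fun h => hx₀ (Or.inl ⟨z, hzC, h⟩)
    have hz2 : z.2 ≠ x₀ := fun h => hx₀ (Or.inr ⟨z, hzC, h⟩)
    show (z ∈ R') = (z ∈ R₀.val)
    simp only [hR', Set.mem_inter_iff, Set.mem_setOf_eq]
    exact propext (by tauto)
  · rintro ⟨g, hg⟩
    have hg' : R' = {p : X × X | p.2 = g p.1} := hg
    have : (x₀, g x₀) ∈ R' := by rw [hg']; rfl
    exact this.2.1 rfl
end
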